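/- The tableaux algorithm obtained by adding the rule SA(b,d) (from b I x infer d I x) — respectively the rule SX(y,z) (from a I y infer a I z) — to the LE-ALC tableaux expansion rules is a terminating (in polynomial time), sound and complete decision procedure for the consistency of A together with the axiom ∀p (b I p ⇒ d I p) — respectively of A together with the axiom ∀p (p I y ⇒ p I z). -/

import Mathlib

/-!
Common formal infrastructure for the description logic LE-ALC:
syntax of concepts, individual names, ABox terms, the tableaux expansion
rules and completion, and the polarity-based (enriched formal context)
semantics.
-/

namespace LEALC

/-- LE-ALC concepts: `C ::= D | C₁ ∧ C₂ | C₁ ∨ C₂ | [R_□]C | ⟨R_◇⟩C`. -/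
inductive Cpt : Type
  | atom : ℕ → Cpt
  | meet : Cpt → Cpt → Cpt
  | join : Cpt → Cpt → Cpt
  | box  : Cpt → Cpt
  | dia  : Cpt → Cpt
  deriving DecidableEq

/-- Object individual names: ordinary names from `OBJ`, classifying objects
`a_C`, and the prefixed names `◇b`, `◆b` generated by the tableaux. -/
inductive ObName : Type
  | base : ℕ → ObName
  | cls  : Cpt → ObName
  | dia  : ObName → ObName
  | bdia : ObName → ObName
  deriving DecidableEq

/-- Feature individual names: ordinary names from `FEAT`, classifying features
`x_C`, and the prefixed names `□y`, `■y` generated by the tableaux. -/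
inductive FtName : Type
  | base : ℕ → FtName
  | cls  : Cpt → FtName
  | box  : FtName → FtName
  | bbox : FtName → FtName
  deriving DecidableEq

/-- `◇b`, with the identification `◇a_C = a_{◇C}`. -/
def ObName.diaS : ObName → ObName
  | .cls C => .cls (.dia C)
  | b => .dia b

/-- `□y`, with the identification `□x_C = x_{□C}`. -/
def FtName.boxS : FtName → FtName
  | .cls C => .cls (.box C)
  | y => .box y

/-- Positive (unnegated) ABox terms:
`a I x`, `a R_□ x`, `x R_◇ a`, `a : C`, `x :: C`. -/
inductive PTerm : Type
  | rI   : ObName → FtName → PTerm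
  | rbox : ObName → FtName → PTerm
  | rdia : FtName → ObName → PTerm
  | mem  : ObName → Cpt → PTerm
  | fmem : FtName → Cpt → PTerm
  deriving DecidableEq

/-- ABox terms: a positive term or its negation. -/
inductive Term : Type
  | pos : PTerm → Term
  | neg : PTerm → Term
  deriving DecidableEq

/-- The relational terms are `a I x`, `a R_□ x` and `x R_◇ a`. -/
def PTerm.IsRelational : PTerm → Prop
  | .rI _ _ => True
  | .rbox _ _ => True
  | .rdia _ _ => True
  | .mem _ _ => False
  | .fmem _ _ => False

/-- Subformulas (subconcepts) of a concept. -/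
def Cpt.subs : Cpt → Finset Cpt
  | .atom n => {Cpt.atom n}
  | .meet C₁ C₂ => insert (Cpt.meet C₁ C₂) (C₁.subs ∪ C₂.subs)
  | .join C₁ C₂ => insert (Cpt.join C₁ C₂) (C₁.subs ∪ C₂.subs)
  | .box C => insert (Cpt.box C) C.subs
  | .dia C => insert (Cpt.dia C) C.subs

/-- The concepts occurring in a term (subformulas of the concept of a
(possibly negated) membership assertion). -/
def Term.cpts : Term → Finset Cpt
  | .pos (.mem _ C) => C.subs
  | .pos (.fmem _ C) => C.subs
  | .neg (.mem _ C) => C.subs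
  | .neg (.fmem _ C) => C.subs
  | _ => ∅

/-- The concept `C` occurs in the set of terms `A`. -/
def Occurs (C : Cpt) (A : Set Term) : Prop := ∃ t ∈ A, C ∈ t.cpts

def PTerm.objs : PTerm → List ObName
  | .rI b _ => [b]
  | .rbox b _ => [b]
  | .rdia _ b => [b]
  | .mem b _ => [b]
  | .fmem _ _ => []

def PTerm.feats : PTerm → List FtName
  | .rI _ y => [y]
  | .rbox _ y => [y]
  | .rdia y _ => [y]
  | .mem _ _ => []
  | .fmem y _ => [y]

def Term.objs : Term → List ObName
  | .pos t => t.objs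
  | .neg t => t.objs

def Term.feats : Term → List FtName
  | .pos t => t.feats
  | .neg t => t.feats

/-- The object name `b` occurs in the set of terms `S`. -/
def ObOccurs (b : ObName) (S : Set Term) : Prop := ∃ t ∈ S, b ∈ t.objs

/-- The feature name `y` occurs in the set of terms `S`. -/
def FtOccurs (y : FtName) (S : Set Term) : Prop := ∃ t ∈ S, y ∈ t.feats

def ObName.IsBase (b : ObName) : Prop := ∃ n, b = ObName.base n
def FtName.IsBase (y : FtName) : Prop := ∃ n, y = FtName.base n

/-- A term all of whose individual names are ordinary (non-generated) names. -/
def Term.Plain (t : Term) : Prop :=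
  (∀ b ∈ t.objs, b.IsBase) ∧ (∀ y ∈ t.feats, y.IsBase)

/-- An ABox is a set of terms over the ordinary individual names `OBJ`/`FEAT`
(the generated names `a_C`, `x_C`, `◇b`, `◆b`, `□y`, `■y` are fresh). -/
def ABoxWF (A : Set Term) : Prop := ∀ t ∈ A, t.Plain

def Cpt.csize : Cpt → ℕ
  | .atom _ => 1
  | .meet C₁ C₂ => C₁.csize + C₂.csize + 1
  | .join C₁ C₂ => C₁.csize + C₂.csize + 1
  | .box C => C.csize + 1
  | .dia C => C.csize + 1

def PTerm.psize : PTerm → ℕ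
  | .rI _ _ => 1
  | .rbox _ _ => 1
  | .rdia _ _ => 1
  | .mem _ C => C.csize + 1
  | .fmem _ C => C.csize + 1

def Term.tsize : Term → ℕ
  | .pos t => t.psize + 1
  | .neg t => t.psize + 2

/-- The size `|A|` of an ABox. -/
def aboxSize (A : Finset Term) : ℕ := A.sum Term.tsize

/-- Box-depth of a concept. -/
def Cpt.bd : Cpt → ℕ
  | .atom _ => 0
  | .meet C₁ C₂ => max C₁.bd C₂.bd
  | .join C₁ C₂ => max C₁.bd C₂.bd
  | .box C => C.bd + 1
  | .dia C => C.bd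

/-- Diamond-depth of a concept. -/
def Cpt.dd : Cpt → ℕ
  | .atom _ => 0
  | .meet C₁ C₂ => max C₁.dd C₂.dd
  | .join C₁ C₂ => max C₁.dd C₂.dd
  | .box C => C.dd
  | .dia C => C.dd + 1

/-- Box-depth of an object name (names in the input ABox have depth 0,
prefixing changes the depth, classifying names inherit depths from their
concept). -/
def ObName.bd : ObName → ℤ
  | .base _ => 0
  | .cls C => -(C.bd : ℤ)
  | .dia b => b.bd
  | .bdia b => b.bd + 1

/-- Diamond-depth of an object name. -/
def ObName.dd : ObName → ℤ
  | .base _ => 0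
  | .cls C => -(C.dd : ℤ)
  | .dia b => b.dd + 1
  | .bdia b => b.dd

/-- Box-depth of a feature name. -/
def FtName.bd : FtName → ℤ
  | .base _ => 0
  | .cls C => -(C.bd : ℤ)
  | .box y => y.bd + 1
  | .bbox y => y.bd

/-- Diamond-depth of a feature name. -/
def FtName.dd : FtName → ℤ
  | .base _ => 0
  | .cls C => -(C.dd : ℤ)
  | .box y => y.dd
  | .bbox y => y.dd + 1

/-- All concepts occurring in an ABox. -/
def aboxCpts (A : Finset Term) : Finset Cpt := A.biUnion Term.cpts

/-- `□_D(A)`: maximal box-depth of a concept occurring in `A`. -/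
def aboxBd (A : Finset Term) : ℕ := (aboxCpts A).sup Cpt.bd

/-- `◇_D(A)`: maximal diamond-depth of a concept occurring in `A`. -/
def aboxDd (A : Finset Term) : ℕ := (aboxCpts A).sup Cpt.dd

/-- One-step derivability: `Deriv E A S t` holds iff the term `t` can be
added by applying one of the LE-ALC tableaux expansion rules (or the extra
rule `E`) to the current set of terms `S`, `A` being the input ABox (used
for the side conditions of the creation and inverse rules). -/
inductive Deriv (E : Term → Term → Prop) (A S : Set Term) : Term → Prop
  /-- creation rule -/
  | create_a {C : Cpt} : Occurs C A → Deriv E A S (.pos (.mem (.cls C) C))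
  | create_x {C : Cpt} : Occurs C A → Deriv E A S (.pos (.fmem (.cls C) C))
  /-- basic rule -/
  | basic {b y C} : Term.pos (.mem b C) ∈ S → Term.pos (.fmem y C) ∈ S →
      Deriv E A S (.pos (.rI b y))
  /-- rules for the logical connectives -/
  | andA_l {b C₁ C₂} : Term.pos (.mem b (.meet C₁ C₂)) ∈ S → Deriv E A S (.pos (.mem b C₁))
  | andA_r {b C₁ C₂} : Term.pos (.mem b (.meet C₁ C₂)) ∈ S → Deriv E A S (.pos (.mem b C₂))
  | orX_l {y C₁ C₂} : Term.pos (.fmem y (.join C₁ C₂)) ∈ S → Deriv E A S (.pos (.fmem y C₁))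
  | orX_r {y C₁ C₂} : Term.pos (.fmem y (.join C₁ C₂)) ∈ S → Deriv E A S (.pos (.fmem y C₂))
  | boxR {b y C} : Term.pos (.mem b (.box C)) ∈ S → Term.pos (.fmem y C) ∈ S →
      Deriv E A S (.pos (.rbox b y))
  | diaR {b y C} : Term.pos (.fmem y (.dia C)) ∈ S → Term.pos (.mem b C) ∈ S →
      Deriv E A S (.pos (.rdia y b))
  /-- inverse rules for the connectives -/
  | andA_inv {b C₁ C₂} : Term.pos (.mem b C₁) ∈ S → Term.pos (.mem b C₂) ∈ S →
      Occurs (.meet C₁ C₂) A → Deriv E A S (.pos (.mem b (.meet C₁ C₂)))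
  | orX_inv {y C₁ C₂} : Term.pos (.fmem y C₁) ∈ S → Term.pos (.fmem y C₂) ∈ S →
      Occurs (.join C₁ C₂) A → Deriv E A S (.pos (.fmem y (.join C₁ C₂)))
  /-- adjunction rules -/
  | adj_box_l {b y} : Term.pos (.rbox b y) ∈ S → Deriv E A S (.pos (.rI (.bdia b) y))
  | adj_box_r {b y} : Term.pos (.rbox b y) ∈ S → Deriv E A S (.pos (.rI b (FtName.boxS y)))
  | adj_dia_l {b y} : Term.pos (.rdia y b) ∈ S → Deriv E A S (.pos (.rI (ObName.diaS b) y))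
  | adj_dia_r {b y} : Term.pos (.rdia y b) ∈ S → Deriv E A S (.pos (.rI b (.bbox y)))
  /-- I-compatibility rules -/
  | icomp_box {b y} : Term.pos (.rI b (FtName.boxS y)) ∈ S → Deriv E A S (.pos (.rbox b y))
  | icomp_bbox {b y} : Term.pos (.rI b (.bbox y)) ∈ S → Deriv E A S (.pos (.rdia y b))
  | icomp_dia {b y} : Term.pos (.rI (ObName.diaS b) y) ∈ S → Deriv E A S (.pos (.rdia y b))
  | icomp_bdia {b y} : Term.pos (.rI (.bdia b) y) ∈ S → Deriv E A S (.pos (.rbox b y))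
  /-- basic rules for negative assertions -/
  | neg_b {b C} : Term.neg (.mem b C) ∈ S → Deriv E A S (.neg (.rI b (.cls C)))
  | neg_x {y C} : Term.neg (.fmem y C) ∈ S → Deriv E A S (.neg (.rI (.cls C) y))
  /-- appending rules -/
  | app_x {b C} : Term.pos (.rI b (.cls C)) ∈ S → Deriv E A S (.pos (.mem b C))
  | app_a {y C} : Term.pos (.rI (.cls C) y) ∈ S → Deriv E A S (.pos (.fmem y C))
  /-- an additional expansion rule `E` -/
  | extra {t t'} : E t t' → t ∈ S → Deriv E A S t'

/-- `S` contains `A` and is closed under the expansion rules. -/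
def RuleClosed (E : Term → Term → Prop) (A S : Set Term) : Prop :=
  A ⊆ S ∧ ∀ t, Deriv E A S t → t ∈ S

/-- The tableaux completion `Ā` of the ABox `A` (w.r.t. the LE-ALC expansion
rules together with the extra rule `E`): the least set of terms containing
`A` and closed under the rules. -/
def Compl (E : Term → Term → Prop) (A : Set Term) : Set Term :=
  {t | ∀ S : Set Term, RuleClosed E A S → t ∈ S}

/-- No extra expansion rule: the plain LE-ALC tableaux algorithm. -/
def noExt : Term → Term → Prop := fun _ _ => False

/-- One expansion step of the tableaux algorithm: a rule is applied to the
current set `B` and adds a new term. -/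
def Step (E : Term → Term → Prop) (A B B' : Set Term) : Prop :=
  ∃ t, Deriv E A B t ∧ t ∉ B ∧ B' = insert t B

/-- A clash: some relational term occurs together with its negation. -/
def HasClash (S : Set Term) : Prop :=
  ∃ β : PTerm, β.IsRelational ∧ Term.pos β ∈ S ∧ Term.neg β ∈ S

/-- The separation rule `SA(b,d)`: from `b I x` infer `d I x`. -/
def ruleSA (b d : ObName) : Term → Term → Prop :=
  fun t t' => ∃ x : FtName, t = Term.pos (.rI b x) ∧ t' = Term.pos (.rI d x)

/-- The separation rule `SX(y,z)`: from `a I y` infer `a I z`. -/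
def ruleSX (y z : FtName) : Term → Term → Prop :=
  fun t t' => ∃ a : ObName, t = Term.pos (.rI a y) ∧ t' = Term.pos (.rI a z)

/-- The rule `SA(R_□,R_◇,b)`: from `b R_□ y` infer `y R_◇ b`. -/
def ruleSAR (b : ObName) : Term → Term → Prop :=
  fun t t' => ∃ x : FtName, t = Term.pos (.rbox b x) ∧ t' = Term.pos (.rdia x b)

/-- The rule `SX(R_◇,R_□,y)`: from `y R_◇ a` infer `a R_□ y`. -/
def ruleSXR (y : FtName) : Term → Term → Prop :=
  fun t t' => ∃ a : ObName, t = Term.pos (.rdia y a) ∧ t' = Term.pos (.rbox a y)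

/-! ## Semantics: enriched formal contexts -/

/-- `I^{(1)}[B]` -/
def gup {O F : Type} (I : O → F → Prop) (B : Set O) : Set F := {x | ∀ a ∈ B, I a x}

/-- `I^{(0)}[Y]` -/
def gdn {O F : Type} (I : O → F → Prop) (Y : Set F) : Set O := {a | ∀ x ∈ Y, I a x}

/-- Galois-stability for sets of objects. -/
def StableO {O F : Type} (I : O → F → Prop) (B : Set O) : Prop := gdn I (gup I B) = B

/-- Galois-stability for sets of features. -/
def StableF {O F : Type} (I : O → F → Prop) (Y : Set F) : Prop := gup I (gdn I Y) = Y

/-- An interpretation of LE-ALC: an enriched formal context `(Ob, Ft, I, R_□, R_◇)`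
together with interpretations of the individual names and of the atomic
concepts (an atomic concept is interpreted by the formal concept whose
extent is `vA n` and whose intent is `gup I (vA n)`). -/
structure Model where
  Ob : Type
  Ft : Type
  I : Ob → Ft → Prop
  Rb : Ob → Ft → Prop
  Rd : Ft → Ob → Prop
  oi : ObName → Ob
  fi : FtName → Ft
  vA : ℕ → Set Ob

/-- Intent of the interpretation of an atomic concept. -/
def Model.vX (M : Model) (n : ℕ) : Set M.Ft := gup M.I (M.vA n)

/-- Well-formedness of an interpretation: `R_□` and `R_◇` are `I`-compatible,
and atomic concepts are interpreted by formal concepts. -/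
def Model.Good (M : Model) : Prop :=
  (∀ x, StableO M.I {a | M.Rb a x}) ∧
  (∀ a, StableF M.I {x | M.Rb a x}) ∧
  (∀ a, StableF M.I {x | M.Rd x a}) ∧
  (∀ x, StableO M.I {a | M.Rd x a}) ∧
  (∀ n, StableO M.I (M.vA n))

/-- The interpretation `C^M = (extent, intent)` of a concept. -/
def Model.ci (M : Model) : Cpt → Set M.Ob × Set M.Ft
  | .atom n => (M.vA n, M.vX n)
  | .meet C₁ C₂ =>
      ((Model.ci M C₁).1 ∩ (Model.ci M C₂).1,
        gup M.I ((Model.ci M C₁).1 ∩ (Model.ci M C₂).1))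
  | .join C₁ C₂ =>
      (gdn M.I ((Model.ci M C₁).2 ∩ (Model.ci M C₂).2),
        (Model.ci M C₁).2 ∩ (Model.ci M C₂).2)
  | .box C =>
      (gdn M.Rb (Model.ci M C).2, gup M.I (gdn M.Rb (Model.ci M C).2))
  | .dia C =>
      (gdn M.I (gup (fun a x => M.Rd x a) (Model.ci M C).1),
        gup (fun a x => M.Rd x a) (Model.ci M C).1)

/-- Satisfaction of positive ABox terms. -/
def Model.SatP (M : Model) : PTerm → Prop
  | .rI b y => M.I (M.oi b) (M.fi y)
  | .rbox b y => M.Rb (M.oi b) (M.fi y)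
  | .rdia y b => M.Rd (M.fi y) (M.oi b)
  | .mem b C => M.oi b ∈ (Model.ci M C).1
  | .fmem y C => M.fi y ∈ (Model.ci M C).2

/-- Satisfaction of ABox terms. -/
def Model.Sat (M : Model) : Term → Prop
  | .pos t => M.SatP t
  | .neg t => ¬ M.SatP t

/-- `M` is a model of the set of terms `A`. -/
def Model.SatAll (M : Model) (A : Set Term) : Prop := ∀ t ∈ A, M.Sat t

/-- An ABox is consistent iff it has a model. -/
def Consistent (A : Set Term) : Prop := ∃ M : Model, M.Good ∧ M.SatAll A

/-- `A ⊨ t`: every model of `A` satisfies `t`. -/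
def Entails (A : Set Term) (t : Term) : Prop :=
  ∀ M : Model, M.Good → M.SatAll A → M.Sat t

/-- `A ⊨ C₁ ⊑ C₂`: in every model of `A`, `C₁^M ≤ C₂^M` in the concept lattice. -/
def EntailsSub (A : Set Term) (C₁ C₂ : Cpt) : Prop :=
  ∀ M : Model, M.Good → M.SatAll A → (Model.ci M C₁).1 ⊆ (Model.ci M C₂).1

/-! ### Semantic concept operations -/

/-- The operation `[R_□]` on (extent, intent) pairs. -/
def Model.cbox (M : Model) (c : Set M.Ob × Set M.Ft) : Set M.Ob × Set M.Ft :=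
  (gdn M.Rb c.2, gup M.I (gdn M.Rb c.2))

/-- The operation `⟨R_◇⟩` on (extent, intent) pairs. -/
def Model.cdia (M : Model) (c : Set M.Ob × Set M.Ft) : Set M.Ob × Set M.Ft :=
  (gdn M.I (gup (fun a x => M.Rd x a) c.1), gup (fun a x => M.Rd x a) c.1)

/-- The operation `◆` (left adjoint of `[R_□]`). -/
def Model.cbdia (M : Model) (c : Set M.Ob × Set M.Ft) : Set M.Ob × Set M.Ft :=
  (gdn M.I (gup M.Rb c.1), gup M.Rb c.1)

/-- The operation `■` (right adjoint of `⟨R_◇⟩`). -/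
def Model.cbbox (M : Model) (c : Set M.Ob × Set M.Ft) : Set M.Ob × Set M.Ft :=
  (gdn (fun a x => M.Rd x a) c.2, gup M.I (gdn (fun a x => M.Rd x a) c.2))

/-- The concept `𝐚 = (a^{↑↓}, a^{↑})` generated by an object. -/
def Model.genO (M : Model) (a : M.Ob) : Set M.Ob × Set M.Ft :=
  (gdn M.I (gup M.I {a}), gup M.I {a})

/-- The concept `𝐱 = (x^{↓}, x^{↓↑})` generated by a feature. -/
def Model.genF (M : Model) (x : M.Ft) : Set M.Ob × Set M.Ft :=
  (gdn M.I {x}, gup M.I (gdn M.I {x}))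

/-- The concept companion `con(b)` of an object name, interpreted in `M`. -/
def Model.conO (M : Model) : ObName → Set M.Ob × Set M.Ft
  | .base n => M.genO (M.oi (.base n))
  | .cls C => M.genO (M.oi (.cls C))
  | .dia b => M.cdia (Model.conO M b)
  | .bdia b => M.cbdia (Model.conO M b)

/-- The concept companion `con(y)` of a feature name, interpreted in `M`. -/
def Model.conF (M : Model) : FtName → Set M.Ob × Set M.Ft
  | .base n => M.genF (M.fi (.base n))
  | .cls C => M.genF (M.fi (.cls C))
  | .box y => M.cbox (Model.conF M y)
  | .bbox y => M.cbbox (Model.conF M y)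

/-! ### The canonical model built from the tableaux completion -/

/-- Classical `dite`. -/
noncomputable def cdite {α : Sort*} (p : Prop) (f : p → α) (g : ¬ p → α) : α :=
  @dite α p (Classical.dec p) f g

/-- The canonical model built from the tableaux completion `Ā` of `A`:
its objects (resp. features) are the object (resp. feature) names occurring
in `Ā` (plus a dummy point interpreting the names not occurring in `Ā`),
every name occurring in `Ā` is interpreted by itself, the relations are read
off from `Ā`, and an atomic concept `D` is interpreted by the formal concept
`(x_D^↓, a_D^↑)`. -/
noncomputable def canModel (A : Finset Term) : Model where
  Ob := Option {b : ObName // ObOccurs b (Compl noExt ↑A)}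
  Ft := Option {y : FtName // FtOccurs y (Compl noExt ↑A)}
  I := fun o x => ∃ b y, o = some b ∧ x = some y ∧
        Term.pos (.rI b.1 y.1) ∈ Compl noExt ↑A
  Rb := fun o x => ∃ b y, o = some b ∧ x = some y ∧
        Term.pos (.rbox b.1 y.1) ∈ Compl noExt ↑A
  Rd := fun x o => ∃ b y, o = some b ∧ x = some y ∧
        Term.pos (.rdia y.1 b.1) ∈ Compl noExt ↑A
  oi := fun b => cdite (ObOccurs b (Compl noExt ↑A)) (fun h => some ⟨b, h⟩) (fun _ => none)
  fi := fun y => cdite (FtOccurs y (Compl noExt ↑A)) (fun h => some ⟨y, h⟩) (fun _ => none)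
  vA := fun n => {o | ∃ b, o = some b ∧
        Term.pos (.rI b.1 (.cls (.atom n))) ∈ Compl noExt ↑A}

/-! ### ◇-leading and □-leading concepts -/

/-- ◇-leading concepts. -/
inductive DiaLeading : Cpt → Prop
  | atom (n : ℕ) : DiaLeading (.dia (.atom n))
  | dia {C : Cpt} : DiaLeading C → DiaLeading (.dia C)
  | join {C : Cpt} (C₁ : Cpt) : DiaLeading C → DiaLeading (.join C C₁)
  | meet {C₁ C₂ : Cpt} : DiaLeading C₁ → DiaLeading C₂ → DiaLeading (.meet C₁ C₂)

/-- □-leading concepts. -/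
inductive BoxLeading : Cpt → Prop
  | atom (n : ℕ) : BoxLeading (.box (.atom n))
  | box {C : Cpt} : BoxLeading C → BoxLeading (.box C)
  | meet {C : Cpt} (C₁ : Cpt) : BoxLeading C → BoxLeading (.meet C C₁)
  | join {C₁ C₂ : Cpt} : BoxLeading C₁ → BoxLeading C₂ → BoxLeading (.join C₁ C₂)

/-! ### Auxiliary: Galois connection facts -/

section Galois
variable {O F : Type} (I : O → F → Prop)

lemma gup_antitone {X Y : Set O} (h : X ⊆ Y) : gup I Y ⊆ gup I X :=
  fun _ hx _ ha => hx _ (h ha)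

lemma gdn_antitone {X Y : Set F} (h : X ⊆ Y) : gdn I Y ⊆ gdn I X :=
  fun _ hx _ ha => hx _ (h ha)

lemma subset_gdn_gup (X : Set O) : X ⊆ gdn I (gup I X) :=
  fun a ha _ hx => hx _ ha

lemma subset_gup_gdn (Y : Set F) : Y ⊆ gup I (gdn I Y) :=
  fun x hx _ ha => ha _ hx

lemma gup_gdn_gup (X : Set O) : gup I (gdn I (gup I X)) = gup I X :=
  Set.Subset.antisymm (gup_antitone I (subset_gdn_gup I X)) (subset_gup_gdn I _)

lemma gdn_gup_gdn (Y : Set F) : gdn I (gup I (gdn I Y)) = gdn I Y :=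
  Set.Subset.antisymm (gdn_antitone I (subset_gup_gdn I Y)) (subset_gdn_gup I _)

/-- An intersection of rows `{a | R a x}`, each `I`-stable, is `I`-stable. -/
lemma stableO_gdn {G : Type} (R : O → G → Prop)
    (h : ∀ x, StableO I {a | R a x}) (Z : Set G) : StableO I (gdn R Z) := by
  refine Set.Subset.antisymm (fun a' ha' x hx => ?_) (subset_gdn_gup I _)
  have h1 : gdn R Z ⊆ {a | R a x} := fun a ha => ha _ hx
  have h2 : gup I {a | R a x} ⊆ gup I (gdn R Z) := gup_antitone I h1
  have : a' ∈ gdn I (gup I {a | R a x}) := fun y hy => ha' _ (h2 hy)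
  rw [h x] at this; exact this

lemma stableF_gup {G : Type} (R : G → F → Prop)
    (h : ∀ a, StableF I {x | R a x}) (Z : Set G) : StableF I (gup R Z) := by
  refine Set.Subset.antisymm (fun x' hx' a ha => ?_) (subset_gup_gdn I _)
  have h1 : gup R Z ⊆ {x | R a x} := fun x hx => hx _ ha
  have h2 : gdn I {x | R a x} ⊆ gdn I (gup R Z) := gdn_antitone I h1
  have : x' ∈ gup I (gdn I {x | R a x}) := fun y hy => hx' _ (h2 hy)
  rw [h a] at this; exact this

end Galois

/-! ### Completion infrastructure -/

lemma Deriv.mono {E : Term → Term → Prop} {A S S' : Set Term} (h : S ⊆ S') :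
    ∀ {t}, Deriv E A S t → Deriv E A S' t := by
  intro t hd
  cases hd with
  | create_a h1 => exact .create_a h1
  | create_x h1 => exact .create_x h1
  | basic h1 h2 => exact .basic (h h1) (h h2)
  | andA_l h1 => exact .andA_l (h h1)
  | andA_r h1 => exact .andA_r (h h1)
  | orX_l h1 => exact .orX_l (h h1)
  | orX_r h1 => exact .orX_r (h h1)
  | boxR h1 h2 => exact .boxR (h h1) (h h2)
  | diaR h1 h2 => exact .diaR (h h1) (h h2)
  | andA_inv h1 h2 h3 => exact .andA_inv (h h1) (h h2) h3
  | orX_inv h1 h2 h3 => exact .orX_inv (h h1) (h h2) h3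
  | adj_box_l h1 => exact .adj_box_l (h h1)
  | adj_box_r h1 => exact .adj_box_r (h h1)
  | adj_dia_l h1 => exact .adj_dia_l (h h1)
  | adj_dia_r h1 => exact .adj_dia_r (h h1)
  | icomp_box h1 => exact .icomp_box (h h1)
  | icomp_bbox h1 => exact .icomp_bbox (h h1)
  | icomp_dia h1 => exact .icomp_dia (h h1)
  | icomp_bdia h1 => exact .icomp_bdia (h h1)
  | neg_b h1 => exact .neg_b (h h1)
  | neg_x h1 => exact .neg_x (h h1)
  | app_x h1 => exact .app_x (h h1)
  | app_a h1 => exact .app_a (h h1)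
  | extra he h1 => exact .extra he (h h1)

lemma subset_compl {E : Term → Term → Prop} {A : Set Term} : A ⊆ Compl E A :=
  fun _ ht _ hS => hS.1 ht

lemma compl_subset {E : Term → Term → Prop} {A S : Set Term}
    (h : RuleClosed E A S) : Compl E A ⊆ S := fun _ ht => ht S h

lemma compl_ruleClosed (E : Term → Term → Prop) (A : Set Term) :
    RuleClosed E A (Compl E A) := by
  refine ⟨subset_compl, fun t hd S hS => hS.2 t (Deriv.mono (compl_subset hS) hd)⟩

lemma compl_closed {E : Term → Term → Prop} {A : Set Term} {t : Term}
    (h : Deriv E A (Compl E A) t) : t ∈ Compl E A :=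
  (compl_ruleClosed E A).2 t h

lemma occurs_mono {C : Cpt} {A S : Set Term} (h : A ⊆ S) (hC : Occurs C A) :
    Occurs C S := by obtain ⟨t, ht, h2⟩ := hC; exact ⟨t, h ht, h2⟩

lemma obOccurs_mono {b : ObName} {A S : Set Term} (h : A ⊆ S) (hb : ObOccurs b A) :
    ObOccurs b S := by obtain ⟨t, ht, h2⟩ := hb; exact ⟨t, h ht, h2⟩

lemma ftOccurs_mono {y : FtName} {A S : Set Term} (h : A ⊆ S) (hy : FtOccurs y A) :
    FtOccurs y S := by obtain ⟨t, ht, h2⟩ := hy; exact ⟨t, h ht, h2⟩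

/-! Subconcept facts -/

lemma mem_subs_self (C : Cpt) : C ∈ C.subs := by
  cases C <;> simp [Cpt.subs]

lemma subs_trans : ∀ {C D E : Cpt}, D ∈ C.subs → E ∈ D.subs → E ∈ C.subs := by
  intro C
  induction C with
  | atom n => intro D E hD hE; simp [Cpt.subs] at hD; subst hD; exact hE
  | meet C₁ C₂ ih1 ih2 =>
    intro D E hD hE
    simp only [Cpt.subs, Finset.mem_insert, Finset.mem_union] at hD ⊢
    rcases hD with h | h | h
    · subst h; simpa [Cpt.subs] using hE
    · exact .inr (.inl (ih1 h hE))
    · exact .inr (.inr (ih2 h hE))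
  | join C₁ C₂ ih1 ih2 =>
    intro D E hD hE
    simp only [Cpt.subs, Finset.mem_insert, Finset.mem_union] at hD ⊢
    rcases hD with h | h | h
    · subst h; simpa [Cpt.subs] using hE
    · exact .inr (.inl (ih1 h hE))
    · exact .inr (.inr (ih2 h hE))
  | box C ih =>
    intro D E hD hE
    simp only [Cpt.subs, Finset.mem_insert] at hD ⊢
    rcases hD with h | h
    · subst h; simpa [Cpt.subs] using hE
    · exact .inr (ih h hE)
  | dia C ih =>
    intro D E hD hE
    simp only [Cpt.subs, Finset.mem_insert] at hD ⊢
    rcases hD with h | h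
    · subst h; simpa [Cpt.subs] using hE
    · exact .inr (ih h hE)

lemma occurs_of_sub {A : Set Term} {C D : Cpt} (h : Occurs C A) (hD : D ∈ C.subs) :
    Occurs D A := by
  obtain ⟨t, ht, hC⟩ := h
  refine ⟨t, ht, ?_⟩
  cases t with
  | pos p => cases p <;> simp_all [Term.cpts] <;> exact subs_trans hC hD
  | neg p => cases p <;> simp_all [Term.cpts] <;> exact subs_trans hC hD

lemma occurs_meet_left {A : Set Term} {C₁ C₂ : Cpt} (h : Occurs (.meet C₁ C₂) A) :
    Occurs C₁ A := occurs_of_sub h (by simp [Cpt.subs, mem_subs_self])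

lemma occurs_meet_right {A : Set Term} {C₁ C₂ : Cpt} (h : Occurs (.meet C₁ C₂) A) :
    Occurs C₂ A := occurs_of_sub h (by simp [Cpt.subs, mem_subs_self])

lemma occurs_join_left {A : Set Term} {C₁ C₂ : Cpt} (h : Occurs (.join C₁ C₂) A) :
    Occurs C₁ A := occurs_of_sub h (by simp [Cpt.subs, mem_subs_self])

lemma occurs_join_right {A : Set Term} {C₁ C₂ : Cpt} (h : Occurs (.join C₁ C₂) A) :
    Occurs C₂ A := occurs_of_sub h (by simp [Cpt.subs, mem_subs_self])

lemma occurs_box {A : Set Term} {C : Cpt} (h : Occurs (.box C) A) : Occurs C A :=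
  occurs_of_sub h (by simp [Cpt.subs, mem_subs_self])

lemma occurs_dia {A : Set Term} {C : Cpt} (h : Occurs (.dia C) A) : Occurs C A :=
  occurs_of_sub h (by simp [Cpt.subs, mem_subs_self])


/-! ### Soundness: concept companions in an arbitrary good model -/

section Soundness
variable {M : Model}

/-- `c` is a formal concept of `M`. -/
def IsCpt (M : Model) (c : Set M.Ob × Set M.Ft) : Prop :=
  c.2 = gup M.I c.1 ∧ c.1 = gdn M.I c.2

lemma isCpt_genO (a : M.Ob) : IsCpt M (M.genO a) :=
  ⟨(gup_gdn_gup M.I {a}).symm, rfl⟩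

lemma isCpt_genF (x : M.Ft) : IsCpt M (M.genF x) := ⟨rfl, (gdn_gup_gdn M.I {x}).symm⟩

lemma isCpt_cbox (hM : M.Good) (c : Set M.Ob × Set M.Ft) : IsCpt M (M.cbox c) :=
  ⟨rfl, ((stableO_gdn M.I M.Rb hM.1 c.2)).symm⟩

lemma isCpt_cdia (hM : M.Good) (c : Set M.Ob × Set M.Ft) : IsCpt M (M.cdia c) := by
  refine ⟨?_, rfl⟩
  exact (stableF_gup M.I (fun a x => M.Rd x a) hM.2.2.1 c.1).symm

lemma isCpt_cbdia (hM : M.Good) (c : Set M.Ob × Set M.Ft) : IsCpt M (M.cbdia c) := by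
  refine ⟨?_, rfl⟩
  exact (stableF_gup M.I M.Rb hM.2.1 c.1).symm

lemma isCpt_cbbox (hM : M.Good) (c : Set M.Ob × Set M.Ft) : IsCpt M (M.cbbox c) := by
  refine ⟨rfl, ?_⟩
  exact (stableO_gdn M.I (fun a x => M.Rd x a) hM.2.2.2.1 c.2).symm

lemma isCpt_meet {c d : Set M.Ob × Set M.Ft} (hc : IsCpt M c) (hd : IsCpt M d) :
    IsCpt M (c.1 ∩ d.1, gup M.I (c.1 ∩ d.1)) := by
  refine ⟨rfl, ?_⟩
  have h1 : c.1 ∩ d.1 = gdn M.I (c.2 ∪ d.2) := by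
    rw [hc.2, hd.2]
    ext a; constructor
    · rintro ⟨h1, h2⟩ x (hx | hx); exacts [h1 _ hx, h2 _ hx]
    · intro h; exact ⟨fun x hx => h _ (.inl hx), fun x hx => h _ (.inr hx)⟩
  rw [h1, gdn_gup_gdn]

lemma isCpt_join {c d : Set M.Ob × Set M.Ft} (hc : IsCpt M c) (hd : IsCpt M d) :
    IsCpt M (gdn M.I (c.2 ∩ d.2), c.2 ∩ d.2) := by
  refine ⟨?_, rfl⟩
  have h1 : c.2 ∩ d.2 = gup M.I (c.1 ∪ d.1) := by
    rw [hc.1, hd.1]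
    ext x; constructor
    · rintro ⟨h1, h2⟩ a (ha | ha); exacts [h1 _ ha, h2 _ ha]
    · intro h; exact ⟨fun a ha => h _ (.inl ha), fun a ha => h _ (.inr ha)⟩
  rw [h1, gup_gdn_gup]

lemma isCpt_ci (hM : M.Good) : ∀ C : Cpt, IsCpt M (M.ci C) := by
  intro C
  induction C with
  | atom n => exact ⟨rfl, (hM.2.2.2.2 n).symm⟩
  | meet C₁ C₂ ih1 ih2 => exact isCpt_meet ih1 ih2
  | join C₁ C₂ ih1 ih2 => exact isCpt_join ih1 ih2
  | box C ih => exact isCpt_cbox hM (M.ci C)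
  | dia C ih => exact isCpt_cdia hM (M.ci C)

/-- The concept companion used in the soundness proof: classifying names are
interpreted by the concepts they classify. -/
def sconO (M : Model) : ObName → Set M.Ob × Set M.Ft
  | .base n => M.genO (M.oi (.base n))
  | .cls C => M.ci C
  | .dia b => M.cdia (sconO M b)
  | .bdia b => M.cbdia (sconO M b)

def sconF (M : Model) : FtName → Set M.Ob × Set M.Ft
  | .base n => M.genF (M.fi (.base n))
  | .cls C => M.ci C
  | .box y => M.cbox (sconF M y)
  | .bbox y => M.cbbox (sconF M y)

lemma isCpt_sconO (hM : M.Good) (b : ObName) : IsCpt M (sconO M b) := by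
  induction b with
  | base n => exact isCpt_genO _
  | cls C => exact isCpt_ci hM C
  | dia b ih => exact isCpt_cdia hM _
  | bdia b ih => exact isCpt_cbdia hM _

lemma isCpt_sconF (hM : M.Good) (y : FtName) : IsCpt M (sconF M y) := by
  induction y with
  | base n => exact isCpt_genF _
  | cls C => exact isCpt_ci hM C
  | box y ih => exact isCpt_cbox hM _
  | bbox y ih => exact isCpt_cbbox hM _

lemma sconO_diaS (M : Model) (b : ObName) : sconO M (ObName.diaS b) = M.cdia (sconO M b) := by
  cases b <;> rfl

lemma sconF_boxS (M : Model) (y : FtName) : sconF M (FtName.boxS y) = M.cbox (sconF M y) := by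
  cases y <;> rfl

/-- Soundness companion of a positive term. -/
def scomp (M : Model) : PTerm → Prop
  | .rI b y => (sconO M b).1 ⊆ (sconF M y).1
  | .rbox b y => ∀ a ∈ (sconO M b).1, ∀ x ∈ (sconF M y).2, M.Rb a x
  | .rdia y b => ∀ x ∈ (sconF M y).2, ∀ a ∈ (sconO M b).1, M.Rd x a
  | .mem b C => (sconO M b).1 ⊆ (M.ci C).1
  | .fmem y C => (M.ci C).1 ⊆ (sconF M y).1

lemma ext_subset_iff_int (hM : M.Good) {c d : Set M.Ob × Set M.Ft}
    (hc : IsCpt M c) (hd : IsCpt M d) : c.1 ⊆ d.1 → d.2 ⊆ c.2 := by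
  intro h
  rw [hc.1, hd.1]; exact gup_antitone M.I h

lemma int_subset_ext (hM : M.Good) {c d : Set M.Ob × Set M.Ft}
    (hc : IsCpt M c) (hd : IsCpt M d) : d.2 ⊆ c.2 → c.1 ⊆ d.1 := by
  intro h
  rw [hc.2, hd.2]; exact gdn_antitone M.I h

end Soundness

section Soundness2
variable {M : Model}

/-- Possible shapes of negative terms in the completion. -/
def NegShape (A : Set Term) (β : PTerm) : Prop :=
  Term.neg β ∈ A ∨ (∃ b C, β = .rI b (.cls C) ∧ Term.neg (.mem b C) ∈ A) ∨
    (∃ y C, β = .rI (.cls C) y ∧ Term.neg (.fmem y C) ∈ A)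

/-- The soundness invariant. -/
def SInv (M : Model) (A : Set Term) : Term → Prop
  | .pos β => scomp M β
  | .neg β => NegShape A β

lemma genO_le (hM : M.Good) {a : M.Ob} {c : Set M.Ob × Set M.Ft} (hc : IsCpt M c)
    (ha : a ∈ c.1) : (M.genO a).1 ⊆ c.1 := by
  intro a' ha'
  rw [hc.2]
  intro x hx
  have hx' : x ∈ gup M.I c.1 := by rw [← hc.1]; exact hx
  exact ha' x (fun u hu => by cases hu; exact hx' a ha)

lemma le_genF (hM : M.Good) {x : M.Ft} {c : Set M.Ob × Set M.Ft} (hc : IsCpt M c)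
    (hx : x ∈ c.2) : c.1 ⊆ (M.genF x).1 := by
  intro a ha y hy
  cases hy
  have hx' : x ∈ gup M.I c.1 := by rw [← hc.1]; exact hx
  exact hx' a ha

lemma mem_genO_ext (a : M.Ob) : a ∈ (M.genO a).1 := fun x hx => hx a rfl

lemma mem_genF_int (x : M.Ft) : x ∈ (M.genF x).2 := fun a ha => ha x rfl

/-- Terms of a well-formed ABox satisfy the soundness invariant. -/
lemma sinv_base (hM : M.Good) {A : Set Term} (hWF : ABoxWF A)
    (hA : ∀ t ∈ A, M.Sat t) : ∀ t ∈ A, SInv M A t := by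
  intro t ht
  have hs := hA t ht
  have hp := hWF t ht
  cases t with
  | neg β => exact Or.inl ht
  | pos β =>
    cases β with
    | rI b y =>
      obtain ⟨n, rfl⟩ := hp.1 b (by simp [Term.objs, PTerm.objs])
      obtain ⟨m, rfl⟩ := hp.2 y (by simp [Term.feats, PTerm.feats])
      show (M.genO _).1 ⊆ (M.genF _).1
      intro a ha x hx
      have hx' : x = M.fi (.base m) := by cases hx; rfl
      subst hx'
      refine ha _ ?_
      intro a' ha'
      cases ha'
      exact hs
    | rbox b y =>
      obtain ⟨n, rfl⟩ := hp.1 b (by simp [Term.objs, PTerm.objs])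
      obtain ⟨m, rfl⟩ := hp.2 y (by simp [Term.feats, PTerm.feats])
      show ∀ a ∈ (M.genO _).1, ∀ x ∈ (M.genF _).2, M.Rb a x
      intro a ha x hx
      have hcol : a ∈ {a' | M.Rb a' (M.fi (.base m))} := by
        have h1 : {M.oi (.base n)} ⊆ {a' | M.Rb a' (M.fi (.base m))} := by
          intro u hu; cases hu; exact hs
        have h2 := gdn_antitone M.I (gup_antitone M.I h1) ha
        rwa [hM.1 (M.fi (.base m))] at h2
      have hrow : x ∈ {x' | M.Rb a x'} := by
        have h1 : {M.fi (.base m)} ⊆ {x' | M.Rb a x'} := by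
          intro u hu; cases hu; exact hcol
        have h2 := gup_antitone M.I (gdn_antitone M.I h1) hx
        rwa [hM.2.1 a] at h2
      exact hrow
    | rdia y b =>
      obtain ⟨n, rfl⟩ := hp.1 b (by simp [Term.objs, PTerm.objs])
      obtain ⟨m, rfl⟩ := hp.2 y (by simp [Term.feats, PTerm.feats])
      show ∀ x ∈ (M.genF _).2, ∀ a ∈ (M.genO _).1, M.Rd x a
      intro x hx a ha
      have hrow : x ∈ {x' | M.Rd x' (M.oi (.base n))} := by
        have h1 : {M.fi (.base m)} ⊆ {x' | M.Rd x' (M.oi (.base n))} := by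
          intro u hu; cases hu; exact hs
        have h2 := gup_antitone M.I (gdn_antitone M.I h1) hx
        rwa [hM.2.2.1 (M.oi (.base n))] at h2
      have hcol : a ∈ {a' | M.Rd x a'} := by
        have h1 : {M.oi (.base n)} ⊆ {a' | M.Rd x a'} := by
          intro u hu; cases hu; exact hrow
        have h2 := gdn_antitone M.I (gup_antitone M.I h1) ha
        rwa [hM.2.2.2.1 x] at h2
      exact hcol
    | mem b C =>
      obtain ⟨n, rfl⟩ := hp.1 b (by simp [Term.objs, PTerm.objs])
      exact genO_le hM (isCpt_ci hM C) hs
    | fmem y C =>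
      obtain ⟨m, rfl⟩ := hp.2 y (by simp [Term.feats, PTerm.feats])
      exact le_genF hM (isCpt_ci hM C) hs

lemma sinv_ruleClosed (hM : M.Good) {E : Term → Term → Prop} {A : Set Term}
    (hWF : ABoxWF A) (hA : ∀ t ∈ A, M.Sat t)
    (hE : ∀ t t', E t t' → SInv M A t → SInv M A t') :
    RuleClosed E A {t | SInv M A t} := by
  have hci : ∀ C, IsCpt M (M.ci C) := isCpt_ci hM
  have hgo : ∀ b, IsCpt M (sconO M b) := isCpt_sconO hM
  have hgf : ∀ y, IsCpt M (sconF M y) := isCpt_sconF hM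
  constructor
  · exact fun t ht => sinv_base hM hWF hA t ht
  · intro t hd
    cases hd with
    | extra he h1 => exact hE _ _ he h1
    | @create_a C h1 =>
      show (M.ci C).1 ⊆ (M.ci C).1
      exact subset_rfl
    | @create_x C h1 =>
      show (M.ci C).1 ⊆ (M.ci C).1
      exact subset_rfl
    | @basic b y C h1 h2 =>
      have h1 : scomp M (.mem b C) := h1
      have h2 : scomp M (.fmem y C) := h2
      show (sconO M b).1 ⊆ (sconF M y).1
      exact fun a ha => h2 (h1 ha)
    | @andA_l b C₁ C₂ h1 =>
      have h1 : scomp M (.mem b (.meet C₁ C₂)) := h1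
      show (sconO M b).1 ⊆ (M.ci C₁).1
      exact fun a ha => (h1 ha).1
    | @andA_r b C₁ C₂ h1 =>
      have h1 : scomp M (.mem b (.meet C₁ C₂)) := h1
      show (sconO M b).1 ⊆ (M.ci C₂).1
      exact fun a ha => (h1 ha).2
    | @orX_l y C₁ C₂ h1 =>
      have h1 : scomp M (.fmem y (.join C₁ C₂)) := h1
      show (M.ci C₁).1 ⊆ (sconF M y).1
      intro a ha
      refine h1 ?_
      intro x hx
      have : x ∈ (M.ci C₁).2 := hx.1
      rw [(hci C₁).1] at this
      exact this _ ha
    | @orX_r y C₁ C₂ h1 =>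
      have h1 : scomp M (.fmem y (.join C₁ C₂)) := h1
      show (M.ci C₂).1 ⊆ (sconF M y).1
      intro a ha
      refine h1 ?_
      intro x hx
      have : x ∈ (M.ci C₂).2 := hx.2
      rw [(hci C₂).1] at this
      exact this _ ha
    | @boxR b y C h1 h2 =>
      have h1 : scomp M (.mem b (.box C)) := h1
      have h2 : scomp M (.fmem y C) := h2
      show ∀ a ∈ (sconO M b).1, ∀ x ∈ (sconF M y).2, M.Rb a x
      intro a ha x hx
      have h3 : (sconF M y).2 ⊆ (M.ci C).2 :=
        ext_subset_iff_int hM (hci C) (hgf y) h2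
      exact h1 ha _ (h3 hx)
    | @diaR b y C h1 h2 =>
      have h1 : scomp M (.fmem y (.dia C)) := h1
      have h2 : scomp M (.mem b C) := h2
      show ∀ x ∈ (sconF M y).2, ∀ a ∈ (sconO M b).1, M.Rd x a
      intro x hx a ha
      have h3 : (sconF M y).2 ⊆ (M.ci (.dia C)).2 :=
        ext_subset_iff_int hM (hci _) (hgf y) h1
      exact h3 hx _ (h2 ha)
    | @andA_inv b C₁ C₂ h1 h2 h3 =>
      have h1 : scomp M (.mem b C₁) := h1
      have h2 : scomp M (.mem b C₂) := h2
      show (sconO M b).1 ⊆ (M.ci (.meet C₁ C₂)).1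
      exact fun a ha => ⟨h1 ha, h2 ha⟩
    | @orX_inv y C₁ C₂ h1 h2 h3 =>
      have h1 : scomp M (.fmem y C₁) := h1
      have h2 : scomp M (.fmem y C₂) := h2
      show (M.ci (.join C₁ C₂)).1 ⊆ (sconF M y).1
      intro a ha
      rw [(hgf y).2]
      intro x hx
      have hx1 : x ∈ (M.ci C₁).2 := ext_subset_iff_int hM (hci C₁) (hgf y) h1 hx
      have hx2 : x ∈ (M.ci C₂).2 := ext_subset_iff_int hM (hci C₂) (hgf y) h2 hx
      exact (ha : a ∈ gdn M.I _) x ⟨hx1, hx2⟩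
    | @adj_box_l b y h1 =>
      have h1 : scomp M (.rbox b y) := h1
      show (M.cbdia (sconO M b)).1 ⊆ (sconF M y).1
      intro a' ha'
      rw [(hgf y).2]
      intro x hx
      exact ha' x (fun a ha => h1 a ha x hx)
    | @adj_box_r b y h1 =>
      have h1 : scomp M (.rbox b y) := h1
      show (sconO M b).1 ⊆ (sconF M (FtName.boxS y)).1
      rw [sconF_boxS]
      show (sconO M b).1 ⊆ (M.cbox (sconF M y)).1
      intro a ha x hx
      exact h1 a ha x hx
    | @adj_dia_l b y h1 =>
      have h1 : scomp M (.rdia y b) := h1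
      show (sconO M (ObName.diaS b)).1 ⊆ (sconF M y).1
      rw [sconO_diaS]
      show (M.cdia (sconO M b)).1 ⊆ (sconF M y).1
      intro a' ha'
      rw [(hgf y).2]
      intro x hx
      exact ha' x (fun a ha => h1 x hx a ha)
    | @adj_dia_r b y h1 =>
      have h1 : scomp M (.rdia y b) := h1
      show (sconO M b).1 ⊆ (M.cbbox (sconF M y)).1
      intro a ha x hx
      exact h1 x hx a ha
    | @icomp_box b y h1 =>
      have h1 : (sconO M b).1 ⊆ (sconF M (FtName.boxS y)).1 := h1
      rw [sconF_boxS] at h1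
      show ∀ a ∈ (sconO M b).1, ∀ x ∈ (sconF M y).2, M.Rb a x
      intro a ha x hx
      exact h1 ha x hx
    | @icomp_bbox b y h1 =>
      have h1 : scomp M (.rI b (.bbox y)) := h1
      show ∀ x ∈ (sconF M y).2, ∀ a ∈ (sconO M b).1, M.Rd x a
      intro x hx a ha
      exact h1 ha x hx
    | @icomp_dia b y h1 =>
      have h1 : (sconO M (ObName.diaS b)).1 ⊆ (sconF M y).1 := h1
      rw [sconO_diaS] at h1
      show ∀ x ∈ (sconF M y).2, ∀ a ∈ (sconO M b).1, M.Rd x a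
      intro x hx a ha
      have h2 : (sconF M y).2 ⊆ gup (fun a x => M.Rd x a) (sconO M b).1 := by
        have h3 : (sconF M y).2 ⊆ gup M.I (gdn M.I (gup (fun a x => M.Rd x a) (sconO M b).1)) := by
          rw [(hgf y).1]; exact gup_antitone M.I h1
        rwa [stableF_gup M.I (fun a x => M.Rd x a) hM.2.2.1 (sconO M b).1] at h3
      exact h2 hx a ha
    | @icomp_bdia b y h1 =>
      have h1 : scomp M (.rI (.bdia b) y) := h1
      show ∀ a ∈ (sconO M b).1, ∀ x ∈ (sconF M y).2, M.Rb a x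
      intro a ha x hx
      have h2 : (sconF M y).2 ⊆ gup M.Rb (sconO M b).1 := by
        have h3 : (sconF M y).2 ⊆ gup M.I (gdn M.I (gup M.Rb (sconO M b).1)) := by
          rw [(hgf y).1]; exact gup_antitone M.I h1
        rwa [stableF_gup M.I M.Rb hM.2.1 (sconO M b).1] at h3
      exact h2 hx a ha
    | @neg_b b C h1 =>
      have h1 : NegShape A (.mem b C) := h1
      show NegShape A (.rI b (.cls C))
      rcases h1 with h | ⟨_, _, h, _⟩ | ⟨_, _, h, _⟩
      · exact Or.inr (Or.inl ⟨b, C, rfl, h⟩)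
      · exact absurd h (by simp)
      · exact absurd h (by simp)
    | @neg_x y C h1 =>
      have h1 : NegShape A (.fmem y C) := h1
      show NegShape A (.rI (.cls C) y)
      rcases h1 with h | ⟨_, _, h, _⟩ | ⟨_, _, h, _⟩
      · exact Or.inr (Or.inr ⟨y, C, rfl, h⟩)
      · exact absurd h (by simp)
      · exact absurd h (by simp)
    | @app_x b C h1 =>
      have h1 : scomp M (.rI b (.cls C)) := h1
      show (sconO M b).1 ⊆ (M.ci C).1
      exact h1
    | @app_a y C h1 =>
      have h1 : scomp M (.rI (.cls C) y) := h1
      show (M.ci C).1 ⊆ (sconF M y).1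
      exact h1

/-- Soundness: if a good model of the (well-formed) ABox validates the extra
rule's invariant, then the completion has no clash. -/
lemma no_clash_of_model (hM : M.Good) {E : Term → Term → Prop} {A : Set Term}
    (hWF : ABoxWF A) (hA : ∀ t ∈ A, M.Sat t)
    (hE : ∀ t t', E t t' → SInv M A t → SInv M A t') :
    ¬ HasClash (Compl E A) := by
  rintro ⟨β, hrel, hpos, hneg⟩
  have hsub := compl_subset (sinv_ruleClosed hM hWF hA hE)
  have hP : scomp M β := hsub hpos
  have hN : NegShape A β := hsub hneg
  rcases hN with h | ⟨b, C, rfl, h⟩ | ⟨y, C, rfl, h⟩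
  · -- neg β ∈ A : β is a plain relational term
    have hs : ¬ M.SatP β := hA _ h
    have hp := hWF _ h
    cases β with
    | rI b y =>
      obtain ⟨n, rfl⟩ := hp.1 b (by simp [Term.objs, PTerm.objs])
      obtain ⟨m, rfl⟩ := hp.2 y (by simp [Term.feats, PTerm.feats])
      exact hs (hP (mem_genO_ext _) _ rfl)
    | rbox b y =>
      obtain ⟨n, rfl⟩ := hp.1 b (by simp [Term.objs, PTerm.objs])
      obtain ⟨m, rfl⟩ := hp.2 y (by simp [Term.feats, PTerm.feats])
      exact hs (hP _ (mem_genO_ext _) _ (mem_genF_int _))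
    | rdia y b =>
      obtain ⟨n, rfl⟩ := hp.1 b (by simp [Term.objs, PTerm.objs])
      obtain ⟨m, rfl⟩ := hp.2 y (by simp [Term.feats, PTerm.feats])
      exact hs (hP _ (mem_genF_int _) _ (mem_genO_ext _))
    | mem b C => exact hrel.elim
    | fmem y C => exact hrel.elim
  · -- β = rI b (cls C), neg (mem b C) ∈ A
    have hs : ¬ M.SatP (.mem b C) := hA _ h
    have hp := hWF _ h
    obtain ⟨n, rfl⟩ := hp.1 b (by simp [Term.objs, PTerm.objs])
    exact hs (hP (mem_genO_ext _))
  · -- β = rI (cls C) y, neg (fmem y C) ∈ A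
    have hs : ¬ M.SatP (.fmem y C) := hA _ h
    have hp := hWF _ h
    obtain ⟨m, rfl⟩ := hp.2 y (by simp [Term.feats, PTerm.feats])
    refine hs ?_
    show M.fi (.base m) ∈ (M.ci C).2
    rw [(isCpt_ci hM C).1]
    intro a ha
    exact hP ha _ rfl

end Soundness2

/-! ### Completeness: the canonical model of the completion -/

section Canonical
variable (E : Term → Term → Prop) (A : Set Term)

/-- Canonical model for the completion w.r.t. the extra rule `E`. -/
noncomputable def canM : Model where
  Ob := Option {b : ObName // ObOccurs b (Compl E A)}
  Ft := Option {y : FtName // FtOccurs y (Compl E A)}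
  I := fun o x => ∃ b y, o = some b ∧ x = some y ∧
        Term.pos (.rI b.1 y.1) ∈ Compl E A
  Rb := fun o x => ∃ b y, o = some b ∧ x = some y ∧
        Term.pos (.rbox b.1 y.1) ∈ Compl E A
  Rd := fun x o => ∃ b y, o = some b ∧ x = some y ∧
        Term.pos (.rdia y.1 b.1) ∈ Compl E A
  oi := fun b => cdite (ObOccurs b (Compl E A)) (fun h => some ⟨b, h⟩) (fun _ => none)
  fi := fun y => cdite (FtOccurs y (Compl E A)) (fun h => some ⟨y, h⟩) (fun _ => none)
  vA := fun n => {o | ∃ b, o = some b ∧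
        Term.pos (.rI b.1 (.cls (.atom n))) ∈ Compl E A}

variable {E A}

lemma obOccurs_of_rI {b y} (h : Term.pos (.rI b y) ∈ Compl E A) :
    ObOccurs b (Compl E A) := ⟨_, h, by simp [Term.objs, PTerm.objs]⟩

lemma ftOccurs_of_rI {b y} (h : Term.pos (.rI b y) ∈ Compl E A) :
    FtOccurs y (Compl E A) := ⟨_, h, by simp [Term.feats, PTerm.feats]⟩

lemma canI_iff {b y} (hb : ObOccurs b (Compl E A)) (hy : FtOccurs y (Compl E A)) :
    (canM E A).I (some ⟨b, hb⟩) (some ⟨y, hy⟩) ↔ Term.pos (.rI b y) ∈ Compl E A := by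
  constructor
  · rintro ⟨b', y', hb', hy', h⟩
    cases hb'; cases hy'; exact h
  · intro h; exact ⟨_, _, rfl, rfl, h⟩

lemma canRb_iff {b y} (hb : ObOccurs b (Compl E A)) (hy : FtOccurs y (Compl E A)) :
    (canM E A).Rb (some ⟨b, hb⟩) (some ⟨y, hy⟩) ↔ Term.pos (.rbox b y) ∈ Compl E A := by
  constructor
  · rintro ⟨b', y', hb', hy', h⟩
    cases hb'; cases hy'; exact h
  · intro h; exact ⟨_, _, rfl, rfl, h⟩

lemma canRd_iff {b y} (hb : ObOccurs b (Compl E A)) (hy : FtOccurs y (Compl E A)) :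
    (canM E A).Rd (some ⟨y, hy⟩) (some ⟨b, hb⟩) ↔ Term.pos (.rdia y b) ∈ Compl E A := by
  constructor
  · rintro ⟨b', y', hb', hy', h⟩
    cases hb'; cases hy'; exact h
  · intro h; exact ⟨_, _, rfl, rfl, h⟩

lemma canI_none_l {x} : ¬ (canM E A).I none x := by rintro ⟨b, y, h, -, -⟩; cases h
lemma canI_none_r {o} : ¬ (canM E A).I o none := by rintro ⟨b, y, -, h, -⟩; cases h
lemma canRb_none_l {x} : ¬ (canM E A).Rb none x := by rintro ⟨b, y, h, -, -⟩; cases h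
lemma canRb_none_r {o} : ¬ (canM E A).Rb o none := by rintro ⟨b, y, -, h, -⟩; cases h
lemma canRd_none_l {o} : ¬ (canM E A).Rd none o := by rintro ⟨b, y, -, h, -⟩; cases h
lemma canRd_none_r {x} : ¬ (canM E A).Rd x none := by rintro ⟨b, y, h, -, -⟩; cases h

/-- If a set of canonical objects is empty, it is stable. -/
lemma can_stableO_of_empty {X : Set (canM E A).Ob} (h : X = ∅) : StableO (canM E A).I X := by
  subst h
  refine Set.Subset.antisymm ?_ (subset_gdn_gup _ _)
  intro o ho
  have : (canM E A).I o none := ho none (fun a ha => absurd ha (Set.notMem_empty a))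
  exact absurd this canI_none_r

lemma can_stableF_of_empty {Y : Set (canM E A).Ft} (h : Y = ∅) : StableF (canM E A).I Y := by
  subst h
  refine Set.Subset.antisymm ?_ (subset_gup_gdn _ _)
  intro x hx
  have : (canM E A).I none x := hx none (fun a ha => absurd ha (Set.notMem_empty a))
  exact absurd this canI_none_l

lemma canM_good : (canM E A).Good := by
  refine ⟨?_, ?_, ?_, ?_, ?_⟩
  · -- ∀ x, StableO I {a | Rb a x}
    intro x
    by_cases hne : {a | (canM E A).Rb a x} = ∅
    · exact can_stableO_of_empty hne
    · obtain ⟨o, ho⟩ := Set.nonempty_iff_ne_empty.2 hne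
      obtain ⟨b, y, rfl, rfl, hK⟩ := ho
      -- witness feature: □y
      have hKI : Term.pos (.rI b.1 (FtName.boxS y.1)) ∈ Compl E A :=
        compl_closed (.adj_box_r hK)
      have hyS : FtOccurs (FtName.boxS y.1) (Compl E A) := ftOccurs_of_rI hKI
      refine Set.Subset.antisymm ?_ (subset_gdn_gup _ _)
      intro o ho
      have hw : (some ⟨_, hyS⟩ : (canM E A).Ft) ∈
          gup (canM E A).I {a | (canM E A).Rb a (some y)} := by
        rintro a ⟨b', y', rfl, hy', hK'⟩
        cases hy'
        exact ⟨b', ⟨_, hyS⟩, rfl, rfl, compl_closed (.adj_box_r hK')⟩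
      have := ho _ hw
      obtain ⟨b', y', rfl, hy', hK'⟩ := this
      cases hy'
      exact ⟨b', y, rfl, rfl, compl_closed (.icomp_box hK')⟩
  · -- ∀ a, StableF I {x | Rb a x}
    intro a
    by_cases hne : {x | (canM E A).Rb a x} = ∅
    · exact can_stableF_of_empty hne
    · obtain ⟨o, ho⟩ := Set.nonempty_iff_ne_empty.2 hne
      obtain ⟨b, y, rfl, rfl, hK⟩ := ho
      have hKI : Term.pos (.rI (.bdia b.1) y.1) ∈ Compl E A :=
        compl_closed (.adj_box_l hK)
      have hbS : ObOccurs (ObName.bdia b.1) (Compl E A) := obOccurs_of_rI hKI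
      refine Set.Subset.antisymm ?_ (subset_gup_gdn _ _)
      intro x hx
      have hw : (some ⟨_, hbS⟩ : (canM E A).Ob) ∈
          gdn (canM E A).I {x | (canM E A).Rb (some b) x} := by
        rintro x' ⟨b', y', hb', rfl, hK'⟩
        cases hb'
        exact ⟨⟨_, hbS⟩, y', rfl, rfl, compl_closed (.adj_box_l hK')⟩
      have := hx _ hw
      obtain ⟨b', y', hb', rfl, hK'⟩ := this
      cases hb'
      exact ⟨b, y', rfl, rfl, compl_closed (.icomp_bdia hK')⟩
  · -- ∀ a, StableF I {x | Rd x a}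
    intro a
    by_cases hne : {x | (canM E A).Rd x a} = ∅
    · exact can_stableF_of_empty hne
    · obtain ⟨o, ho⟩ := Set.nonempty_iff_ne_empty.2 hne
      obtain ⟨b, y, rfl, rfl, hK⟩ := ho
      have hKI : Term.pos (.rI (ObName.diaS b.1) y.1) ∈ Compl E A :=
        compl_closed (.adj_dia_l hK)
      have hbS : ObOccurs (ObName.diaS b.1) (Compl E A) := obOccurs_of_rI hKI
      refine Set.Subset.antisymm ?_ (subset_gup_gdn _ _)
      intro x hx
      have hw : (some ⟨_, hbS⟩ : (canM E A).Ob) ∈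
          gdn (canM E A).I {x | (canM E A).Rd x (some b)} := by
        rintro x' ⟨b', y', hb', rfl, hK'⟩
        cases hb'
        exact ⟨⟨_, hbS⟩, y', rfl, rfl, compl_closed (.adj_dia_l hK')⟩
      have := hx _ hw
      obtain ⟨b', y', hb', rfl, hK'⟩ := this
      cases hb'
      exact ⟨b, y', rfl, rfl, compl_closed (.icomp_dia hK')⟩
  · -- ∀ x, StableO I {a | Rd x a}
    intro x
    by_cases hne : {a | (canM E A).Rd x a} = ∅
    · exact can_stableO_of_empty hne
    · obtain ⟨o, ho⟩ := Set.nonempty_iff_ne_empty.2 hne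
      obtain ⟨b, y, rfl, rfl, hK⟩ := ho
      have hKI : Term.pos (.rI b.1 (.bbox y.1)) ∈ Compl E A :=
        compl_closed (.adj_dia_r hK)
      have hyS : FtOccurs (FtName.bbox y.1) (Compl E A) := ftOccurs_of_rI hKI
      refine Set.Subset.antisymm ?_ (subset_gdn_gup _ _)
      intro o ho
      have hw : (some ⟨_, hyS⟩ : (canM E A).Ft) ∈
          gup (canM E A).I {a | (canM E A).Rd (some y) a} := by
        rintro a ⟨b', y', rfl, hy', hK'⟩
        cases hy'
        exact ⟨b', ⟨_, hyS⟩, rfl, rfl, compl_closed (.adj_dia_r hK')⟩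
      have := ho _ hw
      obtain ⟨b', y', rfl, hy', hK'⟩ := this
      cases hy'
      exact ⟨b', y, rfl, rfl, compl_closed (.icomp_bbox hK')⟩
  · -- ∀ n, StableO I (vA n)
    intro n
    by_cases hne : (canM E A).vA n = ∅
    · exact can_stableO_of_empty hne
    · obtain ⟨o, ho⟩ := Set.nonempty_iff_ne_empty.2 hne
      obtain ⟨b, rfl, hK⟩ := ho
      have hyS : FtOccurs (FtName.cls (.atom n)) (Compl E A) := ftOccurs_of_rI hK
      refine Set.Subset.antisymm ?_ (subset_gdn_gup _ _)
      intro o ho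
      have hw : (some ⟨_, hyS⟩ : (canM E A).Ft) ∈
          gup (canM E A).I ((canM E A).vA n) := by
        rintro a ⟨b', rfl, hK'⟩
        exact ⟨b', ⟨_, hyS⟩, rfl, rfl, hK'⟩
      have := ho _ hw
      obtain ⟨b', y', rfl, hy', hK'⟩ := this
      cases hy'
      exact ⟨b', rfl, hK'⟩

end Canonical

section Truth
variable {E : Term → Term → Prop} {A : Set Term}

lemma krI_of_mem {b C} (hC : Occurs C A) (h : Term.pos (.mem b C) ∈ Compl E A) :
    Term.pos (.rI b (.cls C)) ∈ Compl E A :=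
  compl_closed (.basic h (compl_closed (.create_x hC)))

lemma krI_of_fmem {y C} (hC : Occurs C A) (h : Term.pos (.fmem y C) ∈ Compl E A) :
    Term.pos (.rI (.cls C) y) ∈ Compl E A :=
  compl_closed (.basic (compl_closed (.create_a hC)) h)

lemma kmem_of_rI {b C} (h : Term.pos (.rI b (.cls C)) ∈ Compl E A) :
    Term.pos (.mem b C) ∈ Compl E A := compl_closed (.app_x h)

lemma kfmem_of_rI {y C} (h : Term.pos (.rI (.cls C) y) ∈ Compl E A) :
    Term.pos (.fmem y C) ∈ Compl E A := compl_closed (.app_a h)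

lemma kaC (hC : Occurs C A) :
    Term.pos (.rI (.cls C) (.cls C)) ∈ Compl E A :=
  krI_of_mem hC (compl_closed (.create_a hC))

/-- The truth lemma for the canonical model. -/
lemma truth_lemma : ∀ C : Cpt, Occurs C A →
    (∀ b (hb : ObOccurs b (Compl E A)),
      ((some ⟨b, hb⟩ : (canM E A).Ob) ∈ ((canM E A).ci C).1 ↔
        Term.pos (.rI b (.cls C)) ∈ Compl E A)) ∧
    (∀ y (hy : FtOccurs y (Compl E A)),
      ((some ⟨y, hy⟩ : (canM E A).Ft) ∈ ((canM E A).ci C).2 ↔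
        Term.pos (.rI (.cls C) y) ∈ Compl E A)) ∧
    (none ∉ ((canM E A).ci C).1) ∧ (none ∉ ((canM E A).ci C).2) := by
  intro C
  induction C with
  | atom n =>
    intro hC
    refine ⟨?_, ?_, ?_, ?_⟩
    · intro b hb
      constructor
      · rintro ⟨b', hb', hK⟩
        cases hb'; exact hK
      · intro h; exact ⟨_, rfl, h⟩
    · intro y hy
      constructor
      · intro h
        have haK := kaC (E := E) hC
        have hbo : ObOccurs (ObName.cls (.atom n)) (Compl E A) := obOccurs_of_rI haK
        have hmem : (some ⟨_, hbo⟩ : (canM E A).Ob) ∈ (canM E A).vA n := ⟨⟨_, hbo⟩, rfl, haK⟩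
        obtain ⟨b', y', hb', hy', hK⟩ := h _ hmem
        cases hb'; cases hy'; exact hK
      · intro h
        rintro o ⟨b', rfl, hK'⟩
        have h1 : Term.pos (.mem b'.1 (.atom n)) ∈ Compl E A := kmem_of_rI hK'
        have h2 : Term.pos (.fmem y (.atom n)) ∈ Compl E A := kfmem_of_rI h
        exact ⟨_, _, rfl, rfl, compl_closed (.basic h1 h2)⟩
    · rintro ⟨b', h, -⟩; cases h
    · intro h
      have haK := kaC (E := E) hC
      have hbo : ObOccurs (ObName.cls (.atom n)) (Compl E A) := obOccurs_of_rI haK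
      exact canI_none_r (h _ ⟨⟨_, hbo⟩, rfl, haK⟩)
  | meet C₁ C₂ ih1 ih2 =>
    intro hC
    obtain ⟨ih1b, ih1y, ih1n, ih1m⟩ := ih1 (occurs_meet_left hC)
    obtain ⟨ih2b, ih2y, ih2n, ih2m⟩ := ih2 (occurs_meet_right hC)
    have extb : ∀ b (hb : ObOccurs b (Compl E A)),
        ((some ⟨b, hb⟩ : (canM E A).Ob) ∈ ((canM E A).ci (.meet C₁ C₂)).1 ↔
          Term.pos (.rI b (.cls (.meet C₁ C₂))) ∈ Compl E A) := by
      intro b hb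
      constructor
      · rintro ⟨h1, h2⟩
        have m1 := kmem_of_rI ((ih1b b hb).1 h1)
        have m2 := kmem_of_rI ((ih2b b hb).1 h2)
        exact krI_of_mem hC (compl_closed (.andA_inv m1 m2 hC))
      · intro h
        have hm := kmem_of_rI h
        exact ⟨(ih1b b hb).2 (krI_of_mem (occurs_meet_left hC) (compl_closed (.andA_l hm))),
               (ih2b b hb).2 (krI_of_mem (occurs_meet_right hC) (compl_closed (.andA_r hm)))⟩
    have haK := kaC (E := E) hC
    have hbo : ObOccurs (ObName.cls (.meet C₁ C₂)) (Compl E A) := obOccurs_of_rI haK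
    have haExt : (some ⟨_, hbo⟩ : (canM E A).Ob) ∈ ((canM E A).ci (.meet C₁ C₂)).1 :=
      (extb _ hbo).2 haK
    refine ⟨extb, ?_, ?_, ?_⟩
    · intro y hy
      constructor
      · intro h
        obtain ⟨b', y', hb', hy', hK⟩ := h _ haExt
        cases hb'; cases hy'; exact hK
      · intro h
        intro o ho
        have hfy : Term.pos (.fmem y (.meet C₁ C₂)) ∈ Compl E A := kfmem_of_rI h
        cases o with
        | none => exact absurd ho.1 ih1n
        | some b' =>
          have hm : Term.pos (.mem b'.1 (.meet C₁ C₂)) ∈ Compl E A :=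
            kmem_of_rI ((extb b'.1 b'.2).1 (by cases b'; exact ho))
          exact ⟨_, _, rfl, rfl, compl_closed (.basic hm hfy)⟩
    · intro h; exact ih1n h.1
    · intro h; exact canI_none_r (h _ haExt)
  | join C₁ C₂ ih1 ih2 =>
    intro hC
    obtain ⟨ih1b, ih1y, ih1n, ih1m⟩ := ih1 (occurs_join_left hC)
    obtain ⟨ih2b, ih2y, ih2n, ih2m⟩ := ih2 (occurs_join_right hC)
    have inty : ∀ y (hy : FtOccurs y (Compl E A)),
        ((some ⟨y, hy⟩ : (canM E A).Ft) ∈ ((canM E A).ci (.join C₁ C₂)).2 ↔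
          Term.pos (.rI (.cls (.join C₁ C₂)) y) ∈ Compl E A) := by
      intro y hy
      constructor
      · rintro ⟨h1, h2⟩
        have f1 := kfmem_of_rI ((ih1y y hy).1 h1)
        have f2 := kfmem_of_rI ((ih2y y hy).1 h2)
        exact krI_of_fmem hC (compl_closed (.orX_inv f1 f2 hC))
      · intro h
        have hf := kfmem_of_rI h
        exact ⟨(ih1y y hy).2 (krI_of_fmem (occurs_join_left hC) (compl_closed (.orX_l hf))),
               (ih2y y hy).2 (krI_of_fmem (occurs_join_right hC) (compl_closed (.orX_r hf)))⟩
    have hxK := kaC (E := E) hC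
    have hyo : FtOccurs (FtName.cls (.join C₁ C₂)) (Compl E A) := ftOccurs_of_rI hxK
    have hxInt : (some ⟨_, hyo⟩ : (canM E A).Ft) ∈ ((canM E A).ci (.join C₁ C₂)).2 :=
      (inty _ hyo).2 hxK
    refine ⟨?_, inty, ?_, ?_⟩
    · intro b hb
      constructor
      · intro h
        obtain ⟨b', y', hb', hy', hK⟩ := h _ hxInt
        cases hb'; cases hy'; exact hK
      · intro h
        have hm : Term.pos (.mem b (.join C₁ C₂)) ∈ Compl E A := kmem_of_rI h
        intro x hx
        cases x with
        | none => exact absurd hx.1 ih1m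
        | some y' =>
          have hf : Term.pos (.fmem y'.1 (.join C₁ C₂)) ∈ Compl E A :=
            kfmem_of_rI ((inty y'.1 y'.2).1 (by cases y'; exact hx))
          exact ⟨_, _, rfl, rfl, compl_closed (.basic hm hf)⟩
    · intro h; exact canI_none_l (h _ hxInt)
    · intro h; exact ih1m h.1
  | box C ih =>
    intro hC
    obtain ⟨ihb, ihy, ihn, ihm⟩ := ih (occurs_box hC)
    have hxcK := kaC (E := E) (occurs_box hC)
    have hyco : FtOccurs (FtName.cls C) (Compl E A) := ftOccurs_of_rI hxcK
    have hxcInt : (some ⟨_, hyco⟩ : (canM E A).Ft) ∈ ((canM E A).ci C).2 :=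
      (ihy _ hyco).2 hxcK
    have extb : ∀ b (hb : ObOccurs b (Compl E A)),
        ((some ⟨b, hb⟩ : (canM E A).Ob) ∈ ((canM E A).ci (.box C)).1 ↔
          Term.pos (.rI b (.cls (.box C))) ∈ Compl E A) := by
      intro b hb
      constructor
      · intro h
        obtain ⟨b', y', hb', hy', hK⟩ := h _ hxcInt
        cases hb'; cases hy'
        exact compl_closed (.adj_box_r (b := b) (y := .cls C) hK)
      · intro h
        have hm : Term.pos (.mem b (.box C)) ∈ Compl E A := kmem_of_rI h
        intro x hx
        cases x with
        | none => exact absurd hx ihm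
        | some y' =>
          have hf : Term.pos (.fmem y'.1 C) ∈ Compl E A :=
            kfmem_of_rI ((ihy y'.1 y'.2).1 (by cases y'; exact hx))
          exact ⟨_, _, rfl, rfl, compl_closed (.boxR hm hf)⟩
    have haK := kaC (E := E) hC
    have hbo : ObOccurs (ObName.cls (.box C)) (Compl E A) := obOccurs_of_rI haK
    have haExt : (some ⟨_, hbo⟩ : (canM E A).Ob) ∈ ((canM E A).ci (.box C)).1 :=
      (extb _ hbo).2 haK
    refine ⟨extb, ?_, ?_, ?_⟩
    · intro y hy
      constructor
      · intro h
        obtain ⟨b', y', hb', hy', hK⟩ := h _ haExt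
        cases hb'; cases hy'; exact hK
      · intro h
        have hf : Term.pos (.fmem y (.box C)) ∈ Compl E A := kfmem_of_rI h
        intro o ho
        cases o with
        | none =>
          exact absurd (ho _ hxcInt) canRb_none_l
        | some b' =>
          have hm : Term.pos (.mem b'.1 (.box C)) ∈ Compl E A :=
            kmem_of_rI ((extb b'.1 b'.2).1 (by cases b'; exact ho))
          exact ⟨_, _, rfl, rfl, compl_closed (.basic hm hf)⟩
    · intro h
      exact absurd (h _ hxcInt) canRb_none_l
    · intro h
      exact canI_none_r (h _ haExt)
  | dia C ih =>
    intro hC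
    obtain ⟨ihb, ihy, ihn, ihm⟩ := ih (occurs_dia hC)
    have hacK := kaC (E := E) (occurs_dia hC)
    have hbco : ObOccurs (ObName.cls C) (Compl E A) := obOccurs_of_rI hacK
    have hacExt : (some ⟨_, hbco⟩ : (canM E A).Ob) ∈ ((canM E A).ci C).1 :=
      (ihb _ hbco).2 hacK
    have inty : ∀ y (hy : FtOccurs y (Compl E A)),
        ((some ⟨y, hy⟩ : (canM E A).Ft) ∈ ((canM E A).ci (.dia C)).2 ↔
          Term.pos (.rI (.cls (.dia C)) y) ∈ Compl E A) := by
      intro y hy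
      constructor
      · intro h
        obtain ⟨b', y', hb', hy', hK⟩ := h _ hacExt
        cases hb'; cases hy'
        exact compl_closed (.adj_dia_l (b := .cls C) (y := y) hK)
      · intro h
        have hf : Term.pos (.fmem y (.dia C)) ∈ Compl E A := kfmem_of_rI h
        intro o ho
        cases o with
        | none => exact absurd ho ihn
        | some b' =>
          have hm : Term.pos (.mem b'.1 C) ∈ Compl E A :=
            kmem_of_rI ((ihb b'.1 b'.2).1 (by cases b'; exact ho))
          exact ⟨_, _, rfl, rfl, compl_closed (.diaR hf hm)⟩
    have hxK := kaC (E := E) hC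
    have hyo : FtOccurs (FtName.cls (.dia C)) (Compl E A) := ftOccurs_of_rI hxK
    have hxInt : (some ⟨_, hyo⟩ : (canM E A).Ft) ∈ ((canM E A).ci (.dia C)).2 :=
      (inty _ hyo).2 hxK
    refine ⟨?_, inty, ?_, ?_⟩
    · intro b hb
      constructor
      · intro h
        obtain ⟨b', y', hb', hy', hK⟩ := h _ hxInt
        cases hb'; cases hy'; exact hK
      · intro h
        have hm : Term.pos (.mem b (.dia C)) ∈ Compl E A := kmem_of_rI h
        intro x hx
        cases x with
        | none => exact absurd (hx _ hacExt) canRd_none_l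
        | some y' =>
          have hf : Term.pos (.fmem y'.1 (.dia C)) ∈ Compl E A :=
            kfmem_of_rI ((inty y'.1 y'.2).1 (by cases y'; exact hx))
          exact ⟨_, _, rfl, rfl, compl_closed (.basic hm hf)⟩
    · intro h
      exact canI_none_l (h _ hxInt)
    · intro h
      exact absurd (h _ hacExt) canRd_none_l

end Truth

section CanSat
variable {E : Term → Term → Prop} {A : Set Term}

lemma can_oi {b} (hb : ObOccurs b (Compl E A)) :
    (canM E A).oi b = some ⟨b, hb⟩ := by
  show cdite _ _ _ = _
  unfold cdite
  exact dif_pos hb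

lemma can_fi {y} (hy : FtOccurs y (Compl E A)) :
    (canM E A).fi y = some ⟨y, hy⟩ := by
  show cdite _ _ _ = _
  unfold cdite
  exact dif_pos hy

lemma canM_satAll (hnc : ¬ HasClash (Compl E A)) : (canM E A).SatAll A := by
  intro t ht
  have htK : t ∈ Compl E A := subset_compl ht
  cases t with
  | pos β =>
    cases β with
    | rI b y =>
      have hb := obOccurs_of_rI htK
      have hy := ftOccurs_of_rI htK
      show (canM E A).I ((canM E A).oi b) ((canM E A).fi y)
      rw [can_oi hb, can_fi hy]
      exact (canI_iff hb hy).2 htK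
    | rbox b y =>
      have hb : ObOccurs b (Compl E A) := ⟨_, htK, by simp [Term.objs, PTerm.objs]⟩
      have hy : FtOccurs y (Compl E A) := ⟨_, htK, by simp [Term.feats, PTerm.feats]⟩
      show (canM E A).Rb ((canM E A).oi b) ((canM E A).fi y)
      rw [can_oi hb, can_fi hy]
      exact (canRb_iff hb hy).2 htK
    | rdia y b =>
      have hb : ObOccurs b (Compl E A) := ⟨_, htK, by simp [Term.objs, PTerm.objs]⟩
      have hy : FtOccurs y (Compl E A) := ⟨_, htK, by simp [Term.feats, PTerm.feats]⟩
      show (canM E A).Rd ((canM E A).fi y) ((canM E A).oi b)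
      rw [can_oi hb, can_fi hy]
      exact (canRd_iff hb hy).2 htK
    | mem b C =>
      have hC : Occurs C A := ⟨_, ht, by simp [Term.cpts, mem_subs_self]⟩
      have hrI := krI_of_mem hC htK
      have hb := obOccurs_of_rI hrI
      show (canM E A).oi b ∈ ((canM E A).ci C).1
      rw [can_oi hb]
      exact ((truth_lemma C hC).1 b hb).2 hrI
    | fmem y C =>
      have hC : Occurs C A := ⟨_, ht, by simp [Term.cpts, mem_subs_self]⟩
      have hrI := krI_of_fmem hC htK
      have hy := ftOccurs_of_rI hrI
      show (canM E A).fi y ∈ ((canM E A).ci C).2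
      rw [can_fi hy]
      exact ((truth_lemma C hC).2.1 y hy).2 hrI
  | neg β =>
    cases β with
    | rI b y =>
      have hb : ObOccurs b (Compl E A) := ⟨_, htK, by simp [Term.objs, PTerm.objs]⟩
      have hy : FtOccurs y (Compl E A) := ⟨_, htK, by simp [Term.feats, PTerm.feats]⟩
      show ¬ (canM E A).I ((canM E A).oi b) ((canM E A).fi y)
      rw [can_oi hb, can_fi hy]
      intro hI
      exact hnc ⟨.rI b y, trivial, (canI_iff hb hy).1 hI, htK⟩
    | rbox b y =>
      have hb : ObOccurs b (Compl E A) := ⟨_, htK, by simp [Term.objs, PTerm.objs]⟩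
      have hy : FtOccurs y (Compl E A) := ⟨_, htK, by simp [Term.feats, PTerm.feats]⟩
      show ¬ (canM E A).Rb ((canM E A).oi b) ((canM E A).fi y)
      rw [can_oi hb, can_fi hy]
      intro hI
      exact hnc ⟨.rbox b y, trivial, (canRb_iff hb hy).1 hI, htK⟩
    | rdia y b =>
      have hb : ObOccurs b (Compl E A) := ⟨_, htK, by simp [Term.objs, PTerm.objs]⟩
      have hy : FtOccurs y (Compl E A) := ⟨_, htK, by simp [Term.feats, PTerm.feats]⟩
      show ¬ (canM E A).Rd ((canM E A).fi y) ((canM E A).oi b)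
      rw [can_oi hb, can_fi hy]
      intro hI
      exact hnc ⟨.rdia y b, trivial, (canRd_iff hb hy).1 hI, htK⟩
    | mem b C =>
      have hC : Occurs C A := ⟨_, ht, by simp [Term.cpts, mem_subs_self]⟩
      have hb : ObOccurs b (Compl E A) := ⟨_, htK, by simp [Term.objs, PTerm.objs]⟩
      show ¬ (canM E A).oi b ∈ ((canM E A).ci C).1
      rw [can_oi hb]
      intro hmem
      have hrI := ((truth_lemma C hC).1 b hb).1 hmem
      have hneg : Term.neg (.rI b (.cls C)) ∈ Compl E A := compl_closed (.neg_b htK)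
      exact hnc ⟨.rI b (.cls C), trivial, hrI, hneg⟩
    | fmem y C =>
      have hC : Occurs C A := ⟨_, ht, by simp [Term.cpts, mem_subs_self]⟩
      have hy : FtOccurs y (Compl E A) := ⟨_, htK, by simp [Term.feats, PTerm.feats]⟩
      show ¬ (canM E A).fi y ∈ ((canM E A).ci C).2
      rw [can_fi hy]
      intro hmem
      have hrI := ((truth_lemma C hC).2.1 y hy).1 hmem
      have hneg : Term.neg (.rI (.cls C) y) ∈ Compl E A := compl_closed (.neg_x htK)
      exact hnc ⟨.rI (.cls C) y, trivial, hrI, hneg⟩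

end CanSat

/-! ### Termination: the size invariant on the completion -/

/-- Box-head depth (through meets; joins take the min). -/
def hdp : Cpt → ℤ
  | .atom _ => 0
  | .meet C₁ C₂ => max (hdp C₁) (hdp C₂)
  | .join C₁ C₂ => min (hdp C₁) (hdp C₂)
  | .box C => hdp C + 1
  | .dia _ => 0

/-- Diamond-head depth. -/
def dhp : Cpt → ℤ
  | .atom _ => 0
  | .meet C₁ C₂ => min (dhp C₁) (dhp C₂)
  | .join C₁ C₂ => max (dhp C₁) (dhp C₂)
  | .box _ => 0
  | .dia C => dhp C + 1

lemma hdp_nonneg : ∀ C, 0 ≤ hdp C := by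
  intro C
  induction C with
  | atom n => simp [hdp]
  | meet C₁ C₂ ih1 ih2 => simp [hdp]; omega
  | join C₁ C₂ ih1 ih2 => simp [hdp]; omega
  | box C ih => simp [hdp]; omega
  | dia C ih => simp [hdp]

lemma dhp_nonneg : ∀ C, 0 ≤ dhp C := by
  intro C
  induction C with
  | atom n => simp [dhp]
  | meet C₁ C₂ ih1 ih2 => simp [dhp]; omega
  | join C₁ C₂ ih1 ih2 => simp [dhp]; omega
  | box C ih => simp [dhp]
  | dia C ih => simp [dhp]; omega

lemma hdp_le_bd : ∀ C, hdp C ≤ (Cpt.bd C : ℤ) := by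
  intro C
  induction C with
  | atom n => simp [hdp, Cpt.bd]
  | meet C₁ C₂ ih1 ih2 => simp [hdp, Cpt.bd]; omega
  | join C₁ C₂ ih1 ih2 => simp [hdp, Cpt.bd]; omega
  | box C ih => simp [hdp, Cpt.bd]; omega
  | dia C ih => simp [hdp, Cpt.bd]

lemma dhp_le_dd : ∀ C, dhp C ≤ (Cpt.dd C : ℤ) := by
  intro C
  induction C with
  | atom n => simp [dhp, Cpt.dd]
  | meet C₁ C₂ ih1 ih2 => simp [dhp, Cpt.dd]; omega
  | join C₁ C₂ ih1 ih2 => simp [dhp, Cpt.dd]; omega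
  | box C ih => simp [dhp, Cpt.dd]
  | dia C ih => simp [dhp, Cpt.dd]; omega

def boxIter : ℕ → Cpt → Cpt
  | 0, E => E
  | k+1, E => .box (boxIter k E)

def diaIter : ℕ → Cpt → Cpt
  | 0, E => E
  | k+1, E => .dia (diaIter k E)

section TermInv
variable (A : Set Term) (Bc Dc : ℕ)

/-- Box-words over subconcepts of `A`. -/
def FtWord (C : Cpt) : Prop :=
  ∃ k E, Occurs E A ∧ k ≤ Bc + 1 ∧ C = boxIter k E

/-- Diamond-words over subconcepts of `A`. -/
def ObWord (C : Cpt) : Prop :=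
  ∃ k E, Occurs E A ∧ k ≤ Dc + 1 ∧ C = diaIter k E

/-- The `□`-potential of an object name. -/
def oH : ObName → ℤ
  | .base _ => Bc + 1
  | .cls W => hdp W
  | .dia _ => 0
  | .bdia b => oH b - 1


def oD : ObName → ℤ
  | .base _ => 0
  | .cls W => dhp W
  | .dia b => oD b + 1
  | .bdia _ => 0

def fH : FtName → ℤ
  | .base _ => 0
  | .cls W => hdp W
  | .box y => fH y + 1
  | .bbox y => fH y

def fD : FtName → ℤ
  | .base _ => Dc + 1
  | .cls W => dhp W
  | .box _ => 0
  | .bbox y => fD y - 1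

/-- Well-shaped object names. -/
def obOK : ObName → Prop
  | .base n => ObOccurs (.base n) A
  | .cls W => ObWord A Dc W ∧ hdp W ≤ Bc + 1 ∧ dhp W ≤ Dc + 1
  | .dia b => obOK b ∧ oD (.dia b) ≤ Dc + 1
  | .bdia b => obOK b ∧ oD b = 0 ∧ 1 ≤ oH Bc b

/-- Well-shaped feature names. -/
def ftOK : FtName → Prop
  | .base n => FtOccurs (.base n) A
  | .cls W => FtWord A Bc W ∧ hdp W ≤ Bc + 1 ∧ dhp W ≤ Dc + 1
  | .box y => ftOK y ∧ fH (.box y) ≤ Bc + 1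
  | .bbox y => ftOK y ∧ fH y = 0 ∧ 1 ≤ fD Dc y

/-- The termination invariant. -/
def TInv : Term → Prop
  | .pos (.rI b y) => obOK A Bc Dc b ∧ ftOK A Bc Dc y ∧
      fH y ≤ oH Bc b ∧ oD b ≤ fD Dc y
  | .pos (.rbox b y) => obOK A Bc Dc b ∧ ftOK A Bc Dc y ∧
      fH y + 1 ≤ oH Bc b ∧ oD b = 0
  | .pos (.rdia y b) => obOK A Bc Dc b ∧ ftOK A Bc Dc y ∧
      fH y = 0 ∧ oD b + 1 ≤ fD Dc y
  | .pos (.mem b C) => obOK A Bc Dc b ∧ (FtWord A Bc C ∨ ObWord A Dc C) ∧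
      hdp C ≤ oH Bc b ∧ oD b ≤ dhp C
  | .pos (.fmem y C) => ftOK A Bc Dc y ∧ (FtWord A Bc C ∨ ObWord A Dc C) ∧
      fH y ≤ hdp C ∧ dhp C ≤ fD Dc y
  | .neg β => NegShape A β

variable {A Bc Dc}
variable (hsub : ∀ C, Occurs C A → Cpt.bd C ≤ Bc ∧ Cpt.dd C ≤ Dc)

lemma oD_nonneg : ∀ b, 0 ≤ oD b := by
  intro b
  induction b with
  | base n => simp [oD]
  | cls W => simpa [oD] using dhp_nonneg W
  | dia b ih => simp [oD]; omega
  | bdia b ih => simp [oD]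

lemma fH_nonneg : ∀ y, 0 ≤ fH y := by
  intro y
  induction y with
  | base n => simp [fH]
  | cls W => simpa [fH] using hdp_nonneg W
  | box y ih => simp [fH]; omega
  | bbox y ih => simpa [fH] using ih

lemma obOK_bounds : ∀ b, obOK A Bc Dc b →
    0 ≤ oH Bc b ∧ oH Bc b ≤ Bc + 1 ∧ oD b ≤ Dc + 1 := by
  intro b
  induction b with
  | base n => intro _; simp [oH, oD]; omega
  | cls W =>
    rintro ⟨-, h1, h2⟩
    exact ⟨hdp_nonneg W, h1, h2⟩
  | dia b ih =>
    rintro ⟨h1, h2⟩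
    exact ⟨le_refl 0, by simp [oH]; omega, h2⟩
  | bdia b ih =>
    rintro ⟨h1, h2, h3⟩
    obtain ⟨g1, g2, g3⟩ := ih h1
    refine ⟨by simp [oH]; omega, by simp [oH]; omega, by simp [oD]; omega⟩

lemma ftOK_bounds : ∀ y, ftOK A Bc Dc y →
    0 ≤ fD Dc y ∧ fD Dc y ≤ Dc + 1 ∧ fH y ≤ Bc + 1 := by
  intro y
  induction y with
  | base n => intro _; simp [fD, fH]; omega
  | cls W =>
    rintro ⟨-, h1, h2⟩
    exact ⟨dhp_nonneg W, h2, h1⟩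
  | box y ih =>
    rintro ⟨h1, h2⟩
    exact ⟨le_refl 0, by simp [fD]; omega, h2⟩
  | bbox y ih =>
    rintro ⟨h1, h2, h3⟩
    obtain ⟨g1, g2, g3⟩ := ih h1
    refine ⟨by simp [fD]; omega, by simp [fD]; omega, by simpa [fH] using g3⟩

include hsub in
lemma ftWord_unbox {W : Cpt} (h : FtWord A Bc (.box W)) (hle : hdp W ≤ Bc) :
    FtWord A Bc W ∧ dhp W ≤ Dc := by
  obtain ⟨k, E, hE, hk, heq⟩ := h
  cases k with
  | zero =>
    -- box W occurs, hence W occurs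
    simp only [boxIter] at heq
    subst heq
    have hW : Occurs W A := occurs_box hE
    refine ⟨⟨0, W, hW, by omega, rfl⟩, (dhp_le_dd W).trans ?_⟩
    exact_mod_cast (hsub W hW).2
  | succ k =>
    simp only [boxIter] at heq
    have heq' : W = boxIter k E := by
      injection heq with h'
    subst heq'
    refine ⟨⟨k, E, hE, by omega, rfl⟩, ?_⟩
    cases k with
    | zero =>
      simp only [boxIter]
      exact (dhp_le_dd E).trans (by exact_mod_cast (hsub E hE).2)
    | succ m =>
      simp [boxIter, dhp]

include hsub in
lemma obWord_undia {W : Cpt} (h : ObWord A Dc (.dia W)) (hle : dhp W ≤ Dc) :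
    ObWord A Dc W ∧ hdp W ≤ Bc := by
  obtain ⟨k, E, hE, hk, heq⟩ := h
  cases k with
  | zero =>
    simp only [diaIter] at heq
    subst heq
    have hW : Occurs W A := occurs_dia hE
    refine ⟨⟨0, W, hW, by omega, rfl⟩, (hdp_le_bd W).trans ?_⟩
    exact_mod_cast (hsub W hW).1
  | succ k =>
    simp only [diaIter] at heq
    have heq' : W = diaIter k E := by
      injection heq with h'
    subst heq'
    refine ⟨⟨k, E, hE, by omega, rfl⟩, ?_⟩
    cases k with
    | zero =>
      simp only [diaIter]
      exact (hdp_le_bd E).trans (by exact_mod_cast (hsub E hE).1)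
    | succ m =>
      simp [diaIter, hdp]

/-- Words that are meet-headed or join-headed are genuine subconcepts. -/
lemma word_meet {C₁ C₂ : Cpt} (h : FtWord A Bc (.meet C₁ C₂) ∨ ObWord A Dc (.meet C₁ C₂)) :
    Occurs (.meet C₁ C₂) A := by
  rcases h with ⟨k, E, hE, hk, heq⟩ | ⟨k, E, hE, hk, heq⟩ <;>
  · cases k with
    | zero => simp only [boxIter, diaIter] at heq; subst heq; exact hE
    | succ k => simp [boxIter, diaIter] at heq

lemma word_join {C₁ C₂ : Cpt} (h : FtWord A Bc (.join C₁ C₂) ∨ ObWord A Dc (.join C₁ C₂)) :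
    Occurs (.join C₁ C₂) A := by
  rcases h with ⟨k, E, hE, hk, heq⟩ | ⟨k, E, hE, hk, heq⟩ <;>
  · cases k with
    | zero => simp only [boxIter, diaIter] at heq; subst heq; exact hE
    | succ k => simp [boxIter, diaIter] at heq

include hsub in
lemma word_of_occurs {C : Cpt} (h : Occurs C A) :
    (FtWord A Bc C ∨ ObWord A Dc C) ∧ hdp C ≤ Bc + 1 ∧ dhp C ≤ Dc + 1 := by
  refine ⟨Or.inl ⟨0, C, h, by omega, rfl⟩, ?_, ?_⟩
  · exact (hdp_le_bd C).trans (by have := (hsub C h).1; omega)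
  · exact (dhp_le_dd C).trans (by have := (hsub C h).2; omega)


lemma hdp_boxIter : ∀ (k : ℕ) (E : Cpt), hdp (boxIter k E) = k + hdp E := by
  intro k E
  induction k with
  | zero => simp [boxIter]
  | succ k ih => simp [boxIter, hdp, ih]; ring

lemma dhp_diaIter : ∀ (k : ℕ) (E : Cpt), dhp (diaIter k E) = k + dhp E := by
  intro k E
  induction k with
  | zero => simp [diaIter]
  | succ k ih => simp [diaIter, dhp, ih]; ring

include hsub in
lemma tinv_base (hWF : ABoxWF A) : ∀ t ∈ A, TInv A Bc Dc t := by
  intro t ht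
  have hp := hWF t ht
  cases t with
  | neg β => exact Or.inl ht
  | pos β =>
    cases β with
    | rI b y =>
      obtain ⟨n, rfl⟩ := hp.1 b (by simp [Term.objs, PTerm.objs])
      obtain ⟨m, rfl⟩ := hp.2 y (by simp [Term.feats, PTerm.feats])
      refine ⟨⟨_, ht, ?_⟩, ⟨_, ht, ?_⟩, ?_, ?_⟩
      · simp [Term.objs, PTerm.objs]
      · simp [Term.feats, PTerm.feats]
      · show fH (.base m) ≤ oH Bc (.base n); simp only [oH, fH]; omega
      · show oD (.base n) ≤ fD Dc (.base m); simp only [oD, fD]; omega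
    | rbox b y =>
      obtain ⟨n, rfl⟩ := hp.1 b (by simp [Term.objs, PTerm.objs])
      obtain ⟨m, rfl⟩ := hp.2 y (by simp [Term.feats, PTerm.feats])
      refine ⟨⟨_, ht, ?_⟩, ⟨_, ht, ?_⟩, ?_, ?_⟩
      · simp [Term.objs, PTerm.objs]
      · simp [Term.feats, PTerm.feats]
      · show fH (.base m) + 1 ≤ oH Bc (.base n); simp only [oH, fH]; omega
      · show oD (.base n) = 0; rfl
    | rdia y b =>
      obtain ⟨n, rfl⟩ := hp.1 b (by simp [Term.objs, PTerm.objs])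
      obtain ⟨m, rfl⟩ := hp.2 y (by simp [Term.feats, PTerm.feats])
      refine ⟨⟨_, ht, ?_⟩, ⟨_, ht, ?_⟩, ?_, ?_⟩
      · simp [Term.objs, PTerm.objs]
      · simp [Term.feats, PTerm.feats]
      · show fH (.base m) = 0; rfl
      · show oD (.base n) + 1 ≤ fD Dc (.base m); simp only [oD, fD]; omega
    | mem b C =>
      obtain ⟨n, rfl⟩ := hp.1 b (by simp [Term.objs, PTerm.objs])
      have hC : Occurs C A := ⟨_, ht, by simp [Term.cpts, mem_subs_self]⟩
      obtain ⟨hw, h1, h2⟩ := word_of_occurs hsub hC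
      refine ⟨⟨_, ht, by simp [Term.objs, PTerm.objs]⟩, hw, ?_, ?_⟩
      · show hdp C ≤ oH Bc (.base n); simp only [oH]; omega
      · show oD (.base n) ≤ dhp C; simp only [oD]; exact dhp_nonneg C
    | fmem y C =>
      obtain ⟨m, rfl⟩ := hp.2 y (by simp [Term.feats, PTerm.feats])
      have hC : Occurs C A := ⟨_, ht, by simp [Term.cpts, mem_subs_self]⟩
      obtain ⟨hw, h1, h2⟩ := word_of_occurs hsub hC
      refine ⟨⟨_, ht, by simp [Term.feats, PTerm.feats]⟩, hw, ?_, ?_⟩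
      · show fH (.base m) ≤ hdp C; simp only [fH]; exact hdp_nonneg C
      · show dhp C ≤ fD Dc (.base m); simp only [fD]; omega

include hsub in
lemma tinv_ruleClosed {E : Term → Term → Prop} (hWF : ABoxWF A)
    (hE : ∀ t t', E t t' → TInv A Bc Dc t → TInv A Bc Dc t') :
    RuleClosed E A {t | TInv A Bc Dc t} := by
  constructor
  · exact tinv_base hsub hWF
  · intro t hd
    cases hd with
    | extra he h1 => exact hE _ _ he h1
    | @create_a C hC =>
      obtain ⟨hw, h1, h2⟩ := word_of_occurs hsub hC
      exact ⟨⟨⟨0, C, hC, by omega, rfl⟩, h1, h2⟩, hw, le_refl _, le_refl _⟩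
    | @create_x C hC =>
      obtain ⟨hw, h1, h2⟩ := word_of_occurs hsub hC
      exact ⟨⟨⟨0, C, hC, by omega, rfl⟩, h1, h2⟩, hw, le_refl _, le_refl _⟩
    | @basic b y C h1 h2 =>
      obtain ⟨ho, hw, g1, g2⟩ :=
        show obOK A Bc Dc b ∧ (FtWord A Bc C ∨ ObWord A Dc C) ∧
          hdp C ≤ oH Bc b ∧ oD b ≤ dhp C from h1
      obtain ⟨hf, -, g3, g4⟩ :=
        show ftOK A Bc Dc y ∧ (FtWord A Bc C ∨ ObWord A Dc C) ∧
          fH y ≤ hdp C ∧ dhp C ≤ fD Dc y from h2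
      exact ⟨ho, hf, g3.trans g1, g2.trans g4⟩
    | @andA_l b C₁ C₂ h1 =>
      obtain ⟨ho, hw, g1, g2⟩ :=
        show obOK A Bc Dc b ∧ (FtWord A Bc (.meet C₁ C₂) ∨ ObWord A Dc (.meet C₁ C₂)) ∧
          hdp (.meet C₁ C₂) ≤ oH Bc b ∧ oD b ≤ dhp (.meet C₁ C₂) from h1
      have hC : Occurs (.meet C₁ C₂) A := word_meet hw
      obtain ⟨hw1, -, -⟩ := word_of_occurs hsub (occurs_meet_left hC)
      refine ⟨ho, hw1, le_trans (le_max_left _ _) g1, le_trans g2 (min_le_left _ _)⟩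
    | @andA_r b C₁ C₂ h1 =>
      obtain ⟨ho, hw, g1, g2⟩ :=
        show obOK A Bc Dc b ∧ (FtWord A Bc (.meet C₁ C₂) ∨ ObWord A Dc (.meet C₁ C₂)) ∧
          hdp (.meet C₁ C₂) ≤ oH Bc b ∧ oD b ≤ dhp (.meet C₁ C₂) from h1
      have hC : Occurs (.meet C₁ C₂) A := word_meet hw
      obtain ⟨hw1, -, -⟩ := word_of_occurs hsub (occurs_meet_right hC)
      refine ⟨ho, hw1, le_trans (le_max_right _ _) g1, le_trans g2 (min_le_right _ _)⟩
    | @orX_l y C₁ C₂ h1 =>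
      obtain ⟨hf, hw, g1, g2⟩ :=
        show ftOK A Bc Dc y ∧ (FtWord A Bc (.join C₁ C₂) ∨ ObWord A Dc (.join C₁ C₂)) ∧
          fH y ≤ hdp (.join C₁ C₂) ∧ dhp (.join C₁ C₂) ≤ fD Dc y from h1
      have hC : Occurs (.join C₁ C₂) A := word_join hw
      obtain ⟨hw1, -, -⟩ := word_of_occurs hsub (occurs_join_left hC)
      refine ⟨hf, hw1, le_trans g1 (min_le_left _ _), le_trans (le_max_left _ _) g2⟩
    | @orX_r y C₁ C₂ h1 =>
      obtain ⟨hf, hw, g1, g2⟩ :=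
        show ftOK A Bc Dc y ∧ (FtWord A Bc (.join C₁ C₂) ∨ ObWord A Dc (.join C₁ C₂)) ∧
          fH y ≤ hdp (.join C₁ C₂) ∧ dhp (.join C₁ C₂) ≤ fD Dc y from h1
      have hC : Occurs (.join C₁ C₂) A := word_join hw
      obtain ⟨hw1, -, -⟩ := word_of_occurs hsub (occurs_join_right hC)
      refine ⟨hf, hw1, le_trans g1 (min_le_right _ _), le_trans (le_max_right _ _) g2⟩
    | @boxR b y C h1 h2 =>
      obtain ⟨ho, hw, g1, g2⟩ :=
        show obOK A Bc Dc b ∧ (FtWord A Bc (.box C) ∨ ObWord A Dc (.box C)) ∧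
          hdp (.box C) ≤ oH Bc b ∧ oD b ≤ dhp (.box C) from h1
      obtain ⟨hf, -, g3, g4⟩ :=
        show ftOK A Bc Dc y ∧ (FtWord A Bc C ∨ ObWord A Dc C) ∧
          fH y ≤ hdp C ∧ dhp C ≤ fD Dc y from h2
      refine ⟨ho, hf, ?_, ?_⟩
      · have : hdp (.box C) = hdp C + 1 := rfl
        omega
      · have : dhp (.box C) = 0 := rfl
        have := oD_nonneg b
        omega
    | @diaR b y C h1 h2 =>
      obtain ⟨hf, hw, g1, g2⟩ :=
        show ftOK A Bc Dc y ∧ (FtWord A Bc (.dia C) ∨ ObWord A Dc (.dia C)) ∧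
          fH y ≤ hdp (.dia C) ∧ dhp (.dia C) ≤ fD Dc y from h1
      obtain ⟨ho, -, g3, g4⟩ :=
        show obOK A Bc Dc b ∧ (FtWord A Bc C ∨ ObWord A Dc C) ∧
          hdp C ≤ oH Bc b ∧ oD b ≤ dhp C from h2
      refine ⟨ho, hf, ?_, ?_⟩
      · have : hdp (.dia C) = 0 := rfl
        have := fH_nonneg y
        omega
      · have : dhp (.dia C) = dhp C + 1 := rfl
        omega
    | @andA_inv b C₁ C₂ h1 h2 h3 =>
      obtain ⟨ho, -, g1, g2⟩ :=
        show obOK A Bc Dc b ∧ (FtWord A Bc C₁ ∨ ObWord A Dc C₁) ∧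
          hdp C₁ ≤ oH Bc b ∧ oD b ≤ dhp C₁ from h1
      obtain ⟨-, -, g3, g4⟩ :=
        show obOK A Bc Dc b ∧ (FtWord A Bc C₂ ∨ ObWord A Dc C₂) ∧
          hdp C₂ ≤ oH Bc b ∧ oD b ≤ dhp C₂ from h2
      obtain ⟨hw, -, -⟩ := word_of_occurs hsub h3
      exact ⟨ho, hw, max_le g1 g3, le_min g2 g4⟩
    | @orX_inv y C₁ C₂ h1 h2 h3 =>
      obtain ⟨hf, -, g1, g2⟩ :=
        show ftOK A Bc Dc y ∧ (FtWord A Bc C₁ ∨ ObWord A Dc C₁) ∧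
          fH y ≤ hdp C₁ ∧ dhp C₁ ≤ fD Dc y from h1
      obtain ⟨-, -, g3, g4⟩ :=
        show ftOK A Bc Dc y ∧ (FtWord A Bc C₂ ∨ ObWord A Dc C₂) ∧
          fH y ≤ hdp C₂ ∧ dhp C₂ ≤ fD Dc y from h2
      obtain ⟨hw, -, -⟩ := word_of_occurs hsub h3
      exact ⟨hf, hw, le_min g1 g3, max_le g2 g4⟩
    | @adj_box_l b y h1 =>
      obtain ⟨ho, hf, g1, g2⟩ :=
        show obOK A Bc Dc b ∧ ftOK A Bc Dc y ∧ fH y + 1 ≤ oH Bc b ∧ oD b = 0 from h1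
      have hfn := fH_nonneg y
      refine ⟨⟨ho, g2, by omega⟩, hf, ?_, ?_⟩
      · show fH y ≤ oH Bc b - 1; omega
      · show oD (.bdia b) ≤ fD Dc y
        have := (ftOK_bounds y hf).1
        show (0:ℤ) ≤ fD Dc y
        omega
    | @adj_box_r b y h1 =>
      obtain ⟨ho, hf, g1, g2⟩ :=
        show obOK A Bc Dc b ∧ ftOK A Bc Dc y ∧ fH y + 1 ≤ oH Bc b ∧ oD b = 0 from h1
      have hoB := (obOK_bounds b ho).2.1
      cases y with
      | cls W =>
        obtain ⟨hw, w1, w2⟩ :=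
          show FtWord A Bc W ∧ hdp W ≤ Bc + 1 ∧ dhp W ≤ Dc + 1 from hf
        obtain ⟨k, E2, hE2, hk, rfl⟩ := hw
        have hkle : (k : ℤ) ≤ hdp (boxIter k E2) := by
          rw [hdp_boxIter]; have := hdp_nonneg E2; omega
        have hg1 : hdp (boxIter k E2) + 1 ≤ oH Bc b := g1
        refine ⟨ho, ⟨⟨k + 1, E2, hE2, by push_cast at hkle ⊢; omega, rfl⟩, ?_, ?_⟩, ?_, ?_⟩
        · show hdp (Cpt.box (boxIter k E2)) ≤ Bc + 1
          show hdp (boxIter k E2) + 1 ≤ Bc + 1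
          omega
        · show dhp (Cpt.box (boxIter k E2)) ≤ Dc + 1
          show (0:ℤ) ≤ Dc + 1
          omega
        · show fH (.cls (.box (boxIter k E2))) ≤ oH Bc b
          show hdp (boxIter k E2) + 1 ≤ oH Bc b
          exact hg1
        · show oD b ≤ fD Dc (.cls (.box (boxIter k E2)))
          show oD b ≤ (0:ℤ)
          omega
      | base m =>
        refine ⟨ho, ⟨hf, ?_⟩, ?_, ?_⟩
        · show fH (.base m) + 1 ≤ Bc + 1; simp only [fH] at g1 ⊢; omega
        · show fH (.base m) + 1 ≤ oH Bc b; exact g1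
        · show oD b ≤ (0:ℤ); omega
      | box y' =>
        refine ⟨ho, ⟨hf, ?_⟩, ?_, ?_⟩
        · show fH (.box y') + 1 ≤ Bc + 1; omega
        · show fH (.box y') + 1 ≤ oH Bc b; exact g1
        · show oD b ≤ (0:ℤ); omega
      | bbox y' =>
        refine ⟨ho, ⟨hf, ?_⟩, ?_, ?_⟩
        · show fH (.bbox y') + 1 ≤ Bc + 1; omega
        · show fH (.bbox y') + 1 ≤ oH Bc b; exact g1
        · show oD b ≤ (0:ℤ); omega
    | @adj_dia_l b y h1 =>
      obtain ⟨ho, hf, g1, g2⟩ :=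
        show obOK A Bc Dc b ∧ ftOK A Bc Dc y ∧ fH y = 0 ∧ oD b + 1 ≤ fD Dc y from h1
      have hfD := (ftOK_bounds y hf).2.1
      cases b with
      | cls W =>
        obtain ⟨hw, w1, w2⟩ :=
          show ObWord A Dc W ∧ hdp W ≤ Bc + 1 ∧ dhp W ≤ Dc + 1 from ho
        obtain ⟨k, E2, hE2, hk, rfl⟩ := hw
        have hkle : (k : ℤ) ≤ dhp (diaIter k E2) := by
          rw [dhp_diaIter]; have := dhp_nonneg E2; omega
        have hg2 : dhp (diaIter k E2) + 1 ≤ fD Dc y := g2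
        refine ⟨⟨⟨k + 1, E2, hE2, by push_cast at hkle ⊢; omega, rfl⟩, ?_, ?_⟩, hf, ?_, ?_⟩
        · show hdp (Cpt.dia (diaIter k E2)) ≤ Bc + 1
          show (0:ℤ) ≤ Bc + 1
          omega
        · show dhp (Cpt.dia (diaIter k E2)) ≤ Dc + 1
          show dhp (diaIter k E2) + 1 ≤ Dc + 1
          omega
        · show fH y ≤ oH Bc (.cls (.dia (diaIter k E2)))
          show fH y ≤ (0:ℤ)
          omega
        · show oD (.cls (.dia (diaIter k E2))) ≤ fD Dc y
          show dhp (diaIter k E2) + 1 ≤ fD Dc y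
          exact hg2
      | base n =>
        refine ⟨⟨ho, ?_⟩, hf, ?_, ?_⟩
        · show oD (.base n) + 1 ≤ Dc + 1; simp only [oD] at g2 ⊢; omega
        · show fH y ≤ (0:ℤ); omega
        · show oD (.base n) + 1 ≤ fD Dc y; exact g2
      | dia b' =>
        refine ⟨⟨ho, ?_⟩, hf, ?_, ?_⟩
        · show oD (.dia b') + 1 ≤ Dc + 1; omega
        · show fH y ≤ (0:ℤ); omega
        · show oD (.dia b') + 1 ≤ fD Dc y; exact g2
      | bdia b' =>
        refine ⟨⟨ho, ?_⟩, hf, ?_, ?_⟩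
        · show oD (.bdia b') + 1 ≤ Dc + 1; omega
        · show fH y ≤ (0:ℤ); omega
        · show oD (.bdia b') + 1 ≤ fD Dc y; exact g2
    | @adj_dia_r b y h1 =>
      obtain ⟨ho, hf, g1, g2⟩ :=
        show obOK A Bc Dc b ∧ ftOK A Bc Dc y ∧ fH y = 0 ∧ oD b + 1 ≤ fD Dc y from h1
      have hon := oD_nonneg b
      have hoH := (obOK_bounds b ho).1
      refine ⟨ho, ⟨hf, g1, by omega⟩, ?_, ?_⟩
      · show fH (.bbox y) ≤ oH Bc b; show fH y ≤ _; omega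
      · show oD b ≤ fD Dc (.bbox y); show oD b ≤ fD Dc y - 1; omega
    | @icomp_box b y h1 =>
      cases y with
      | cls W =>
        obtain ⟨ho, hf, g1, g2⟩ :=
          show obOK A Bc Dc b ∧ ftOK A Bc Dc (.cls (.box W)) ∧
            fH (.cls (.box W)) ≤ oH Bc b ∧ oD b ≤ fD Dc (.cls (.box W)) from h1
        obtain ⟨hw, w1, w2⟩ := hf
        have hWle : hdp W ≤ Bc := by
          have : hdp (Cpt.box W) = hdp W + 1 := rfl
          omega
        obtain ⟨hw', hd'⟩ := ftWord_unbox hsub hw hWle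
        have hg1 : hdp W + 1 ≤ oH Bc b := g1
        have hg2 : oD b ≤ dhp (.box W) := g2
        have hdb : dhp (Cpt.box W) = 0 := rfl
        have hnn := oD_nonneg b
        exact ⟨ho, ⟨hw', by omega, by omega⟩, hg1, by omega⟩
      | base m =>
        obtain ⟨ho, hf, g1, g2⟩ :=
          show obOK A Bc Dc b ∧ ftOK A Bc Dc (.box (.base m)) ∧
            fH (.box (.base m)) ≤ oH Bc b ∧ oD b ≤ fD Dc (.box (.base m)) from h1
        have hnn := oD_nonneg b
        have : fD Dc (FtName.box (.base m)) = 0 := rfl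
        exact ⟨ho, hf.1, g1, by omega⟩
      | box y' =>
        obtain ⟨ho, hf, g1, g2⟩ :=
          show obOK A Bc Dc b ∧ ftOK A Bc Dc (.box (.box y')) ∧
            fH (.box (.box y')) ≤ oH Bc b ∧ oD b ≤ fD Dc (.box (.box y')) from h1
        have hnn := oD_nonneg b
        have : fD Dc (FtName.box (.box y')) = 0 := rfl
        exact ⟨ho, hf.1, g1, by omega⟩
      | bbox y' =>
        obtain ⟨ho, hf, g1, g2⟩ :=
          show obOK A Bc Dc b ∧ ftOK A Bc Dc (.box (.bbox y')) ∧
            fH (.box (.bbox y')) ≤ oH Bc b ∧ oD b ≤ fD Dc (.box (.bbox y')) from h1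
        have hnn := oD_nonneg b
        have : fD Dc (FtName.box (.bbox y')) = 0 := rfl
        exact ⟨ho, hf.1, g1, by omega⟩
    | @icomp_bbox b y h1 =>
      obtain ⟨ho, hf, g1, g2⟩ :=
        show obOK A Bc Dc b ∧ ftOK A Bc Dc (.bbox y) ∧
          fH (.bbox y) ≤ oH Bc b ∧ oD b ≤ fD Dc (.bbox y) from h1
      have : fD Dc (FtName.bbox y) = fD Dc y - 1 := rfl
      exact ⟨ho, hf.1, hf.2.1, by omega⟩
    | @icomp_dia b y h1 =>
      cases b with
      | cls W =>
        obtain ⟨ho, hf, g1, g2⟩ :=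
          show obOK A Bc Dc (.cls (.dia W)) ∧ ftOK A Bc Dc y ∧
            fH y ≤ oH Bc (.cls (.dia W)) ∧ oD (.cls (.dia W)) ≤ fD Dc y from h1
        obtain ⟨hw, w1, w2⟩ := ho
        have hWle : dhp W ≤ Dc := by
          have : dhp (Cpt.dia W) = dhp W + 1 := rfl
          omega
        obtain ⟨hw', hd'⟩ := obWord_undia hsub hw hWle
        have hfn := fH_nonneg y
        have h0 : oH Bc (ObName.cls (.dia W)) = hdp (Cpt.dia W) := rfl
        have h00 : hdp (Cpt.dia W) = 0 := rfl
        have hodd : oD (ObName.cls (.dia W)) = dhp W + 1 := rfl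
        exact ⟨⟨hw', by omega, by omega⟩, hf, by omega, by
          show oD (ObName.cls W) + 1 ≤ fD Dc y
          show dhp W + 1 ≤ fD Dc y
          omega⟩
      | base n =>
        obtain ⟨ho, hf, g1, g2⟩ :=
          show obOK A Bc Dc (.dia (.base n)) ∧ ftOK A Bc Dc y ∧
            fH y ≤ oH Bc (.dia (.base n)) ∧ oD (.dia (.base n)) ≤ fD Dc y from h1
        have hfn := fH_nonneg y
        have : oH Bc (ObName.dia (.base n)) = 0 := rfl
        exact ⟨ho.1, hf, by omega, g2⟩
      | dia b' =>
        obtain ⟨ho, hf, g1, g2⟩ :=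
          show obOK A Bc Dc (.dia (.dia b')) ∧ ftOK A Bc Dc y ∧
            fH y ≤ oH Bc (.dia (.dia b')) ∧ oD (.dia (.dia b')) ≤ fD Dc y from h1
        have hfn := fH_nonneg y
        have : oH Bc (ObName.dia (.dia b')) = 0 := rfl
        exact ⟨ho.1, hf, by omega, g2⟩
      | bdia b' =>
        obtain ⟨ho, hf, g1, g2⟩ :=
          show obOK A Bc Dc (.dia (.bdia b')) ∧ ftOK A Bc Dc y ∧
            fH y ≤ oH Bc (.dia (.bdia b')) ∧ oD (.dia (.bdia b')) ≤ fD Dc y from h1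
        have hfn := fH_nonneg y
        have : oH Bc (ObName.dia (.bdia b')) = 0 := rfl
        exact ⟨ho.1, hf, by omega, g2⟩
    | @icomp_bdia b y h1 =>
      obtain ⟨ho, hf, g1, g2⟩ :=
        show obOK A Bc Dc (.bdia b) ∧ ftOK A Bc Dc y ∧
          fH y ≤ oH Bc (.bdia b) ∧ oD (.bdia b) ≤ fD Dc y from h1
      have : oH Bc (ObName.bdia b) = oH Bc b - 1 := rfl
      exact ⟨ho.1, hf, by omega, ho.2.1⟩
    | @neg_b b C h1 =>
      have h1 : NegShape A (.mem b C) := h1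
      show NegShape A (.rI b (.cls C))
      rcases h1 with h | ⟨_, _, h, _⟩ | ⟨_, _, h, _⟩
      · exact Or.inr (Or.inl ⟨b, C, rfl, h⟩)
      · exact absurd h (by simp)
      · exact absurd h (by simp)
    | @neg_x y C h1 =>
      have h1 : NegShape A (.fmem y C) := h1
      show NegShape A (.rI (.cls C) y)
      rcases h1 with h | ⟨_, _, h, _⟩ | ⟨_, _, h, _⟩
      · exact Or.inr (Or.inr ⟨y, C, rfl, h⟩)
      · exact absurd h (by simp)
      · exact absurd h (by simp)
    | @app_x b C h1 =>
      obtain ⟨ho, hf, g1, g2⟩ :=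
        show obOK A Bc Dc b ∧ ftOK A Bc Dc (.cls C) ∧
          fH (.cls C) ≤ oH Bc b ∧ oD b ≤ fD Dc (.cls C) from h1
      exact ⟨ho, Or.inl hf.1, g1, g2⟩
    | @app_a y C h1 =>
      obtain ⟨ho, hf, g1, g2⟩ :=
        show obOK A Bc Dc (.cls C) ∧ ftOK A Bc Dc y ∧
          fH y ≤ oH Bc (.cls C) ∧ oD (.cls C) ≤ fD Dc y from h1
      exact ⟨hf, Or.inr ho.1, g1, g2⟩

end TermInv

/-! ### Termination: counting -/

def diaIterO : ℕ → ObName → ObName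
  | 0, b => b
  | k+1, b => .dia (diaIterO k b)

def bdiaIterO : ℕ → ObName → ObName
  | 0, b => b
  | k+1, b => .bdia (bdiaIterO k b)

def boxIterF : ℕ → FtName → FtName
  | 0, y => y
  | k+1, y => .box (boxIterF k y)

def bboxIterF : ℕ → FtName → FtName
  | 0, y => y
  | k+1, y => .bbox (bboxIterF k y)

lemma oD_diaIterO (i : ℕ) (x : ObName) : oD (diaIterO i x) = i + oD x := by
  induction i with
  | zero => simp [diaIterO]
  | succ i ih => show oD (diaIterO i x) + 1 = _; rw [ih]; push_cast; ring

lemma oH_bdiaIterO (Bc : ℕ) (j : ℕ) (c : ObName) :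
    oH Bc (bdiaIterO j c) = oH Bc c - j := by
  induction j with
  | zero => simp [bdiaIterO]
  | succ j ih => show oH Bc (bdiaIterO j c) - 1 = _; rw [ih]; push_cast; ring

lemma fH_boxIterF (i : ℕ) (x : FtName) : fH (boxIterF i x) = i + fH x := by
  induction i with
  | zero => simp [boxIterF]
  | succ i ih => show fH (boxIterF i x) + 1 = _; rw [ih]; push_cast; ring

lemma fD_bboxIterF (Dc : ℕ) (j : ℕ) (c : FtName) :
    fD Dc (bboxIterF j c) = fD Dc c - j := by
  induction j with
  | zero => simp [bboxIterF]
  | succ j ih => show fD Dc (bboxIterF j c) - 1 = _; rw [ih]; push_cast; ring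

lemma fH_bboxIterF (j : ℕ) (c : FtName) : fH (bboxIterF j c) = fH c := by
  induction j with
  | zero => simp [bboxIterF]
  | succ j ih => show fH (bboxIterF j c) = _; rw [ih]

lemma oD_bdiaIterO_nonneg (j : ℕ) (c : ObName) : 0 ≤ oD (bdiaIterO j c) :=
  oD_nonneg _

section Count
variable (A : Finset Term)

def UCf : Finset Cpt :=
  ((Finset.range (aboxBd A + 2)) ×ˢ aboxCpts A).image (fun p => boxIter p.1 p.2) ∪
  ((Finset.range (aboxDd A + 2)) ×ˢ aboxCpts A).image (fun p => diaIter p.1 p.2)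

def obBase : Finset ObName := A.biUnion (fun t => t.objs.toFinset)
def ftBase : Finset FtName := A.biUnion (fun t => t.feats.toFinset)

def UObC : Finset ObName := obBase A ∪ (UCf A).image ObName.cls
def UFtC : Finset FtName := ftBase A ∪ (UCf A).image FtName.cls

def UOb : Finset ObName :=
  ((Finset.range (aboxDd A + 2) ×ˢ Finset.range (aboxBd A + 2)) ×ˢ UObC A).image
    (fun p => diaIterO p.1.1 (bdiaIterO p.1.2 p.2))

def UFt : Finset FtName :=
  ((Finset.range (aboxBd A + 2) ×ˢ Finset.range (aboxDd A + 2)) ×ˢ UFtC A).image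
    (fun p => boxIterF p.1.1 (bboxIterF p.1.2 p.2))

def UTerm : Finset Term :=
  A ∪ ((UOb A ×ˢ UFt A).image (fun p => Term.pos (.rI p.1 p.2))) ∪
  ((UOb A ×ˢ UFt A).image (fun p => Term.pos (.rbox p.1 p.2))) ∪
  ((UOb A ×ˢ UFt A).image (fun p => Term.pos (.rdia p.2 p.1))) ∪
  ((UOb A ×ˢ UCf A).image (fun p => Term.pos (.mem p.1 p.2))) ∪
  ((UFt A ×ˢ UCf A).image (fun p => Term.pos (.fmem p.1 p.2))) ∪
  ((UOb A ×ˢ UFt A).image (fun p => Term.neg (.rI p.1 p.2)))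

lemma occurs_mem_aboxCpts {C : Cpt} (h : Occurs C ↑A) : C ∈ aboxCpts A := by
  obtain ⟨t, ht, hC⟩ := h
  exact Finset.mem_biUnion.2 ⟨t, ht, hC⟩

lemma hsubA : ∀ C, Occurs C (↑A : Set Term) → Cpt.bd C ≤ aboxBd A ∧ Cpt.dd C ≤ aboxDd A := by
  intro C hC
  have h := occurs_mem_aboxCpts A hC
  exact ⟨Finset.le_sup h, Finset.le_sup h⟩

lemma word_mem_UCf {C : Cpt}
    (h : FtWord ↑A (aboxBd A) C ∨ ObWord ↑A (aboxDd A) C) : C ∈ UCf A := by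
  rcases h with ⟨k, E, hE, hk, rfl⟩ | ⟨k, E, hE, hk, rfl⟩
  · exact Finset.mem_union_left _ (Finset.mem_image.2 ⟨(k, E),
      Finset.mem_product.2 ⟨Finset.mem_range.2 (by omega), occurs_mem_aboxCpts A hE⟩, rfl⟩)
  · exact Finset.mem_union_right _ (Finset.mem_image.2 ⟨(k, E),
      Finset.mem_product.2 ⟨Finset.mem_range.2 (by omega), occurs_mem_aboxCpts A hE⟩, rfl⟩)

lemma obBase_mem {b : ObName} (h : ObOccurs b ↑A) : b ∈ obBase A := by
  obtain ⟨t, ht, hb⟩ := h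
  exact Finset.mem_biUnion.2 ⟨t, ht, List.mem_toFinset.2 hb⟩

lemma ftBase_mem {y : FtName} (h : FtOccurs y ↑A) : y ∈ ftBase A := by
  obtain ⟨t, ht, hy⟩ := h
  exact Finset.mem_biUnion.2 ⟨t, ht, List.mem_toFinset.2 hy⟩

lemma mem_UOb_of_parts {i j : ℕ} {c : ObName} (hi : i ≤ aboxDd A + 1)
    (hj : j ≤ aboxBd A + 1) (hc : c ∈ UObC A) :
    diaIterO i (bdiaIterO j c) ∈ UOb A := by
  apply Finset.mem_image.2
  refine ⟨((i, j), c), ?_, rfl⟩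
  simp only [Finset.mem_product, Finset.mem_range]
  exact ⟨⟨by omega, by omega⟩, hc⟩

lemma mem_UFt_of_parts {i j : ℕ} {c : FtName} (hi : i ≤ aboxBd A + 1)
    (hj : j ≤ aboxDd A + 1) (hc : c ∈ UFtC A) :
    boxIterF i (bboxIterF j c) ∈ UFt A := by
  apply Finset.mem_image.2
  refine ⟨((i, j), c), ?_, rfl⟩
  simp only [Finset.mem_product, Finset.mem_range]
  exact ⟨⟨by omega, by omega⟩, hc⟩

lemma obOK_mem_UOb {b : ObName} (h : obOK ↑A (aboxBd A) (aboxDd A) b) : b ∈ UOb A := by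
  suffices h' : ∀ b, obOK ↑A (aboxBd A) (aboxDd A) b →
      ∃ i j c, i ≤ aboxDd A + 1 ∧ j ≤ aboxBd A + 1 ∧ c ∈ UObC A ∧
        obOK ↑A (aboxBd A) (aboxDd A) c ∧ b = diaIterO i (bdiaIterO j c) by
    obtain ⟨i, j, c, hi, hj, hc, -, rfl⟩ := h' b h
    exact mem_UOb_of_parts A hi hj hc
  intro b
  induction b with
  | base n =>
    intro h
    exact ⟨0, 0, .base n, by omega, by omega,
      Finset.mem_union_left _ (obBase_mem A h), h, rfl⟩
  | cls W =>
    intro h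
    refine ⟨0, 0, .cls W, by omega, by omega, ?_, h, rfl⟩
    exact Finset.mem_union_right _ (Finset.mem_image.2
      ⟨W, word_mem_UCf A (Or.inr h.1), rfl⟩)
  | dia b ih =>
    rintro ⟨h1, h2⟩
    obtain ⟨i, j, c, hi, hj, hc, hcOK, rfl⟩ := ih h1
    refine ⟨i + 1, j, c, ?_, hj, hc, hcOK, rfl⟩
    have e1 : oD (ObName.dia (diaIterO i (bdiaIterO j c))) =
        oD (diaIterO i (bdiaIterO j c)) + 1 := rfl
    have e2 := oD_diaIterO i (bdiaIterO j c)
    have e3 := oD_bdiaIterO_nonneg j c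
    omega
  | bdia b ih =>
    rintro ⟨h1, h2, h3⟩
    obtain ⟨i, j, c, hi, hj, hc, hcOK, rfl⟩ := ih h1
    have e2 := oD_diaIterO i (bdiaIterO j c)
    have e3 := oD_bdiaIterO_nonneg j c
    have hi0 : i = 0 := by omega
    subst hi0
    refine ⟨0, j + 1, c, by omega, ?_, hc, hcOK, rfl⟩
    have e4 := oH_bdiaIterO (aboxBd A) j c
    have e5 := (obOK_bounds c hcOK).2.1
    simp only [diaIterO] at h3 ⊢
    omega

lemma ftOK_mem_UFt {y : FtName} (h : ftOK ↑A (aboxBd A) (aboxDd A) y) : y ∈ UFt A := by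
  suffices h' : ∀ y, ftOK ↑A (aboxBd A) (aboxDd A) y →
      ∃ i j c, i ≤ aboxBd A + 1 ∧ j ≤ aboxDd A + 1 ∧ c ∈ UFtC A ∧
        ftOK ↑A (aboxBd A) (aboxDd A) c ∧ y = boxIterF i (bboxIterF j c) by
    obtain ⟨i, j, c, hi, hj, hc, -, rfl⟩ := h' y h
    exact mem_UFt_of_parts A hi hj hc
  intro y
  induction y with
  | base n =>
    intro h
    exact ⟨0, 0, .base n, by omega, by omega,
      Finset.mem_union_left _ (ftBase_mem A h), h, rfl⟩
  | cls W =>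
    intro h
    refine ⟨0, 0, .cls W, by omega, by omega, ?_, h, rfl⟩
    exact Finset.mem_union_right _ (Finset.mem_image.2
      ⟨W, word_mem_UCf A (Or.inl h.1), rfl⟩)
  | box y ih =>
    rintro ⟨h1, h2⟩
    obtain ⟨i, j, c, hi, hj, hc, hcOK, rfl⟩ := ih h1
    refine ⟨i + 1, j, c, ?_, hj, hc, hcOK, rfl⟩
    have e1 : fH (FtName.box (boxIterF i (bboxIterF j c))) =
        fH (boxIterF i (bboxIterF j c)) + 1 := rfl
    have e2 := fH_boxIterF i (bboxIterF j c)
    have e3 := fH_bboxIterF j c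
    have e4 := fH_nonneg c
    omega
  | bbox y ih =>
    rintro ⟨h1, h2, h3⟩
    obtain ⟨i, j, c, hi, hj, hc, hcOK, rfl⟩ := ih h1
    have e2 := fH_boxIterF i (bboxIterF j c)
    have e3 := fH_bboxIterF j c
    have e4 := fH_nonneg c
    have hi0 : i = 0 := by omega
    subst hi0
    refine ⟨0, j + 1, c, by omega, ?_, hc, hcOK, rfl⟩
    have e5 := fD_bboxIterF (aboxDd A) j c
    have e6 := (ftOK_bounds c hcOK).2.1
    simp only [boxIterF] at h3 ⊢
    omega

lemma tinv_mem_UTerm {t : Term} (hWF : ABoxWF ↑A)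
    (h : TInv ↑A (aboxBd A) (aboxDd A) t) : t ∈ UTerm A := by
  have memA : ∀ {u : Term}, u ∈ (↑A : Set Term) → u ∈ UTerm A := by
    intro u hu
    simp only [UTerm, Finset.mem_union]
    exact Or.inl (Or.inl (Or.inl (Or.inl (Or.inl (Or.inl hu)))))
  cases t with
  | pos β =>
    cases β with
    | rI b y =>
      obtain ⟨ho, hf, -, -⟩ :=
        show obOK ↑A _ _ b ∧ ftOK ↑A _ _ y ∧ _ ∧ _ from h
      simp only [UTerm, Finset.mem_union]
      refine Or.inl (Or.inl (Or.inl (Or.inl (Or.inl (Or.inr ?_)))))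
      exact Finset.mem_image.2 ⟨(b, y), Finset.mem_product.2
        ⟨obOK_mem_UOb A ho, ftOK_mem_UFt A hf⟩, rfl⟩
    | rbox b y =>
      obtain ⟨ho, hf, -, -⟩ :=
        show obOK ↑A _ _ b ∧ ftOK ↑A _ _ y ∧ _ ∧ _ from h
      simp only [UTerm, Finset.mem_union]
      refine Or.inl (Or.inl (Or.inl (Or.inl (Or.inr ?_))))
      exact Finset.mem_image.2 ⟨(b, y), Finset.mem_product.2
        ⟨obOK_mem_UOb A ho, ftOK_mem_UFt A hf⟩, rfl⟩
    | rdia y b =>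
      obtain ⟨ho, hf, -, -⟩ :=
        show obOK ↑A _ _ b ∧ ftOK ↑A _ _ y ∧ _ ∧ _ from h
      simp only [UTerm, Finset.mem_union]
      refine Or.inl (Or.inl (Or.inl (Or.inr ?_)))
      exact Finset.mem_image.2 ⟨(b, y), Finset.mem_product.2
        ⟨obOK_mem_UOb A ho, ftOK_mem_UFt A hf⟩, rfl⟩
    | mem b C =>
      obtain ⟨ho, hw, -, -⟩ :=
        show obOK ↑A _ _ b ∧ (FtWord ↑A _ C ∨ ObWord ↑A _ C) ∧ _ ∧ _ from h
      simp only [UTerm, Finset.mem_union]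
      refine Or.inl (Or.inl (Or.inr ?_))
      exact Finset.mem_image.2 ⟨(b, C), Finset.mem_product.2
        ⟨obOK_mem_UOb A ho, word_mem_UCf A hw⟩, rfl⟩
    | fmem y C =>
      obtain ⟨hf, hw, -, -⟩ :=
        show ftOK ↑A _ _ y ∧ (FtWord ↑A _ C ∨ ObWord ↑A _ C) ∧ _ ∧ _ from h
      simp only [UTerm, Finset.mem_union]
      refine Or.inl (Or.inr ?_)
      exact Finset.mem_image.2 ⟨(y, C), Finset.mem_product.2
        ⟨ftOK_mem_UFt A hf, word_mem_UCf A hw⟩, rfl⟩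
  | neg β =>
    rcases (show NegShape ↑A β from h) with hin | ⟨b, C, rfl, hin⟩ | ⟨y, C, rfl, hin⟩
    · exact memA hin
    · -- b occurs in A, C occurs in A
      have hb : b ∈ UOb A := by
        have hocc : ObOccurs b ↑A := ⟨_, hin, by simp [Term.objs, PTerm.objs]⟩
        have : b = diaIterO 0 (bdiaIterO 0 b) := rfl
        rw [this]
        exact mem_UOb_of_parts A (by omega) (by omega)
          (Finset.mem_union_left _ (obBase_mem A hocc))
      have hy : FtName.cls C ∈ UFt A := by
        have hocc : Occurs C ↑A := ⟨_, hin, by simp [Term.cpts, mem_subs_self]⟩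
        have : FtName.cls C = boxIterF 0 (bboxIterF 0 (.cls C)) := rfl
        rw [this]
        refine mem_UFt_of_parts A (by omega) (by omega) ?_
        exact Finset.mem_union_right _ (Finset.mem_image.2
          ⟨C, word_mem_UCf A (Or.inl ⟨0, C, hocc, by omega, rfl⟩), rfl⟩)
      simp only [UTerm, Finset.mem_union]
      exact Or.inr (Finset.mem_image.2 ⟨(b, .cls C), Finset.mem_product.2 ⟨hb, hy⟩, rfl⟩)
    · have hy : y ∈ UFt A := by
        have hocc : FtOccurs y ↑A := ⟨_, hin, by simp [Term.feats, PTerm.feats]⟩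
        have : y = boxIterF 0 (bboxIterF 0 y) := rfl
        rw [this]
        exact mem_UFt_of_parts A (by omega) (by omega)
          (Finset.mem_union_left _ (ftBase_mem A hocc))
      have hb : ObName.cls C ∈ UOb A := by
        have hocc : Occurs C ↑A := ⟨_, hin, by simp [Term.cpts, mem_subs_self]⟩
        have : ObName.cls C = diaIterO 0 (bdiaIterO 0 (.cls C)) := rfl
        rw [this]
        refine mem_UOb_of_parts A (by omega) (by omega) ?_
        exact Finset.mem_union_right _ (Finset.mem_image.2
          ⟨C, word_mem_UCf A (Or.inl ⟨0, C, hocc, by omega, rfl⟩), rfl⟩)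
      simp only [UTerm, Finset.mem_union]
      exact Or.inr (Finset.mem_image.2 ⟨(.cls C, y), Finset.mem_product.2 ⟨hb, hy⟩, rfl⟩)

end Count

/-! ### Size bounds -/

lemma csize_pos : ∀ C : Cpt, 1 ≤ C.csize := by
  intro C; cases C <;> simp [Cpt.csize] <;> omega

lemma subs_card_le : ∀ C : Cpt, (C.subs).card ≤ C.csize := by
  intro C
  induction C with
  | atom n => simp [Cpt.subs, Cpt.csize]
  | meet C₁ C₂ ih1 ih2 =>
    calc ((Cpt.meet C₁ C₂).subs).card ≤ (C₁.subs ∪ C₂.subs).card + 1 :=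
          Finset.card_insert_le _ _
      _ ≤ (C₁.subs.card + C₂.subs.card) + 1 := by
          have := Finset.card_union_le C₁.subs C₂.subs; omega
      _ ≤ (Cpt.meet C₁ C₂).csize := by simp [Cpt.csize]; omega
  | join C₁ C₂ ih1 ih2 =>
    calc ((Cpt.join C₁ C₂).subs).card ≤ (C₁.subs ∪ C₂.subs).card + 1 :=
          Finset.card_insert_le _ _
      _ ≤ (C₁.subs.card + C₂.subs.card) + 1 := by
          have := Finset.card_union_le C₁.subs C₂.subs; omega
      _ ≤ (Cpt.join C₁ C₂).csize := by simp [Cpt.csize]; omega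
  | box C ih =>
    calc ((Cpt.box C).subs).card ≤ C.subs.card + 1 := Finset.card_insert_le _ _
      _ ≤ (Cpt.box C).csize := by simp [Cpt.csize]; omega
  | dia C ih =>
    calc ((Cpt.dia C).subs).card ≤ C.subs.card + 1 := Finset.card_insert_le _ _
      _ ≤ (Cpt.dia C).csize := by simp [Cpt.csize]; omega

lemma csize_le_of_mem_subs : ∀ {C D : Cpt}, D ∈ C.subs → D.csize ≤ C.csize := by
  intro C
  induction C with
  | atom n => intro D hD; simp [Cpt.subs] at hD; subst hD; exact le_refl _
  | meet C₁ C₂ ih1 ih2 =>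
    intro D hD
    simp only [Cpt.subs, Finset.mem_insert, Finset.mem_union] at hD
    rcases hD with rfl | h | h
    · exact le_refl _
    · exact (ih1 h).trans (by simp [Cpt.csize]; omega)
    · exact (ih2 h).trans (by simp [Cpt.csize]; omega)
  | join C₁ C₂ ih1 ih2 =>
    intro D hD
    simp only [Cpt.subs, Finset.mem_insert, Finset.mem_union] at hD
    rcases hD with rfl | h | h
    · exact le_refl _
    · exact (ih1 h).trans (by simp [Cpt.csize]; omega)
    · exact (ih2 h).trans (by simp [Cpt.csize]; omega)
  | box C ih =>
    intro D hD
    simp only [Cpt.subs, Finset.mem_insert] at hD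
    rcases hD with rfl | h
    · exact le_refl _
    · exact (ih h).trans (by simp [Cpt.csize])
  | dia C ih =>
    intro D hD
    simp only [Cpt.subs, Finset.mem_insert] at hD
    rcases hD with rfl | h
    · exact le_refl _
    · exact (ih h).trans (by simp [Cpt.csize])

lemma bd_le_csize : ∀ C : Cpt, C.bd ≤ C.csize := by
  intro C
  induction C with
  | atom n => simp [Cpt.bd, Cpt.csize]
  | meet C₁ C₂ ih1 ih2 => simp [Cpt.bd, Cpt.csize]; omega
  | join C₁ C₂ ih1 ih2 => simp [Cpt.bd, Cpt.csize]; omega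
  | box C ih => simp [Cpt.bd, Cpt.csize]; omega
  | dia C ih => simp [Cpt.bd, Cpt.csize]; omega

lemma dd_le_csize : ∀ C : Cpt, C.dd ≤ C.csize := by
  intro C
  induction C with
  | atom n => simp [Cpt.dd, Cpt.csize]
  | meet C₁ C₂ ih1 ih2 => simp [Cpt.dd, Cpt.csize]; omega
  | join C₁ C₂ ih1 ih2 => simp [Cpt.dd, Cpt.csize]; omega
  | box C ih => simp [Cpt.dd, Cpt.csize]; omega
  | dia C ih => simp [Cpt.dd, Cpt.csize]; omega

lemma tsize_pos (t : Term) : 1 ≤ t.tsize := by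
  cases t <;> simp [Term.tsize] <;> omega

lemma cpts_card_le (t : Term) : (t.cpts).card ≤ t.tsize := by
  cases t with
  | pos β =>
    cases β <;> simp [Term.cpts, Term.tsize, PTerm.psize] <;>
      first
        | omega
        | (exact le_trans (subs_card_le _) (by omega))
  | neg β =>
    cases β <;> simp [Term.cpts, Term.tsize, PTerm.psize] <;>
      first
        | omega
        | (exact le_trans (subs_card_le _) (by omega))

lemma csize_le_tsize {C : Cpt} {t : Term} (h : C ∈ t.cpts) : C.csize ≤ t.tsize := by
  cases t with
  | pos β =>
    cases β with
    | rI b y => exact absurd h (by simp [Term.cpts])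
    | rbox b y => exact absurd h (by simp [Term.cpts])
    | rdia y b => exact absurd h (by simp [Term.cpts])
    | mem b C' =>
      exact (csize_le_of_mem_subs (by simpa [Term.cpts] using h)).trans
        (by simp [Term.tsize, PTerm.psize]; omega)
    | fmem y C' =>
      exact (csize_le_of_mem_subs (by simpa [Term.cpts] using h)).trans
        (by simp [Term.tsize, PTerm.psize]; omega)
  | neg β =>
    cases β with
    | rI b y => exact absurd h (by simp [Term.cpts])
    | rbox b y => exact absurd h (by simp [Term.cpts])
    | rdia y b => exact absurd h (by simp [Term.cpts])
    | mem b C' =>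
      exact (csize_le_of_mem_subs (by simpa [Term.cpts] using h)).trans
        (by simp [Term.tsize, PTerm.psize]; omega)
    | fmem y C' =>
      exact (csize_le_of_mem_subs (by simpa [Term.cpts] using h)).trans
        (by simp [Term.tsize, PTerm.psize]; omega)

lemma objs_len (t : Term) : (t.objs).length ≤ 1 := by
  cases t with
  | pos β => cases β <;> simp [Term.objs, PTerm.objs]
  | neg β => cases β <;> simp [Term.objs, PTerm.objs]

lemma feats_len (t : Term) : (t.feats).length ≤ 1 := by
  cases t with
  | pos β => cases β <;> simp [Term.feats, PTerm.feats]
  | neg β => cases β <;> simp [Term.feats, PTerm.feats]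

section Cardinal
variable (A : Finset Term)

lemma aboxCpts_card_le : (aboxCpts A).card ≤ aboxSize A :=
  (Finset.card_biUnion_le).trans (Finset.sum_le_sum fun t _ => cpts_card_le t)

lemma cardA_le : A.card ≤ aboxSize A := by
  calc A.card = ∑ _t ∈ A, 1 := by simp
    _ ≤ ∑ t ∈ A, t.tsize := Finset.sum_le_sum fun t _ => tsize_pos t

lemma aboxBd_le : aboxBd A ≤ aboxSize A := by
  apply Finset.sup_le
  intro C hC
  obtain ⟨t, ht, hCt⟩ := Finset.mem_biUnion.1 hC
  calc C.bd ≤ C.csize := bd_le_csize C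
    _ ≤ t.tsize := csize_le_tsize hCt
    _ ≤ aboxSize A := Finset.single_le_sum (fun i _ => Nat.zero_le _) ht

lemma aboxDd_le : aboxDd A ≤ aboxSize A := by
  apply Finset.sup_le
  intro C hC
  obtain ⟨t, ht, hCt⟩ := Finset.mem_biUnion.1 hC
  calc C.dd ≤ C.csize := dd_le_csize C
    _ ≤ t.tsize := csize_le_tsize hCt
    _ ≤ aboxSize A := Finset.single_le_sum (fun i _ => Nat.zero_le _) ht

lemma obBase_card_le : (obBase A).card ≤ aboxSize A := by
  calc (obBase A).card ≤ ∑ t ∈ A, (t.objs.toFinset).card := Finset.card_biUnion_le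
    _ ≤ ∑ t ∈ A, t.tsize := Finset.sum_le_sum fun t _ =>
        le_trans (le_trans t.objs.toFinset_card_le (objs_len t)) (tsize_pos t)

lemma ftBase_card_le : (ftBase A).card ≤ aboxSize A := by
  calc (ftBase A).card ≤ ∑ t ∈ A, (t.feats.toFinset).card := Finset.card_biUnion_le
    _ ≤ ∑ t ∈ A, t.tsize := Finset.sum_le_sum fun t _ =>
        le_trans (le_trans t.feats.toFinset_card_le (feats_len t)) (tsize_pos t)

lemma UTerm_card_le : (UTerm A).card ≤ 100000 * (aboxSize A + 1) ^ 8 := by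
  set m := aboxSize A + 1 with hm
  have hm1 : 1 ≤ m := by omega
  have hcpts : (aboxCpts A).card ≤ m := by have := aboxCpts_card_le A; omega
  have hB2 : aboxBd A + 2 ≤ 2 * m := by have := aboxBd_le A; omega
  have hD2 : aboxDd A + 2 ≤ 2 * m := by have := aboxDd_le A; omega
  have hUC : (UCf A).card ≤ 8 * m ^ 2 := by
    calc (UCf A).card ≤
        (((Finset.range (aboxBd A + 2)) ×ˢ aboxCpts A).image
          (fun p => boxIter p.1 p.2)).card +
        (((Finset.range (aboxDd A + 2)) ×ˢ aboxCpts A).image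
          (fun p => diaIter p.1 p.2)).card := Finset.card_union_le _ _
      _ ≤ (aboxBd A + 2) * (aboxCpts A).card + (aboxDd A + 2) * (aboxCpts A).card := by
          have h1 := Finset.card_image_le (s := (Finset.range (aboxBd A + 2)) ×ˢ aboxCpts A)
            (f := fun p => boxIter p.1 p.2)
          have h2 := Finset.card_image_le (s := (Finset.range (aboxDd A + 2)) ×ˢ aboxCpts A)
            (f := fun p => diaIter p.1 p.2)
          rw [Finset.card_product, Finset.card_range] at h1 h2
          omega
      _ ≤ (2 * m) * m + (2 * m) * m := by
          have := Nat.mul_le_mul hB2 hcpts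
          have := Nat.mul_le_mul hD2 hcpts
          omega
      _ ≤ 8 * m ^ 2 := by ring_nf; omega
  have hUObC : (UObC A).card ≤ 9 * m ^ 2 := by
    calc (UObC A).card ≤ (obBase A).card + ((UCf A).image ObName.cls).card :=
          Finset.card_union_le _ _
      _ ≤ m + 8 * m ^ 2 := by
          have h1 := obBase_card_le A
          have h2 := (Finset.card_image_le (s := UCf A) (f := ObName.cls)).trans hUC
          omega
      _ ≤ 9 * m ^ 2 := by nlinarith
  have hUFtC : (UFtC A).card ≤ 9 * m ^ 2 := by
    calc (UFtC A).card ≤ (ftBase A).card + ((UCf A).image FtName.cls).card :=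
          Finset.card_union_le _ _
      _ ≤ m + 8 * m ^ 2 := by
          have h1 := ftBase_card_le A
          have h2 := (Finset.card_image_le (s := UCf A) (f := FtName.cls)).trans hUC
          omega
      _ ≤ 9 * m ^ 2 := by nlinarith
  have hUOb : (UOb A).card ≤ 36 * m ^ 4 := by
    calc (UOb A).card ≤
        ((Finset.range (aboxDd A + 2) ×ˢ Finset.range (aboxBd A + 2)) ×ˢ UObC A).card :=
          Finset.card_image_le
      _ = (aboxDd A + 2) * (aboxBd A + 2) * (UObC A).card := by
          rw [Finset.card_product, Finset.card_product, Finset.card_range, Finset.card_range]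
      _ ≤ (2 * m) * (2 * m) * (9 * m ^ 2) :=
          Nat.mul_le_mul (Nat.mul_le_mul hD2 hB2) hUObC
      _ = 36 * m ^ 4 := by ring
  have hUFt : (UFt A).card ≤ 36 * m ^ 4 := by
    calc (UFt A).card ≤
        ((Finset.range (aboxBd A + 2) ×ˢ Finset.range (aboxDd A + 2)) ×ˢ UFtC A).card :=
          Finset.card_image_le
      _ = (aboxBd A + 2) * (aboxDd A + 2) * (UFtC A).card := by
          rw [Finset.card_product, Finset.card_product, Finset.card_range, Finset.card_range]
      _ ≤ (2 * m) * (2 * m) * (9 * m ^ 2) :=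
          Nat.mul_le_mul (Nat.mul_le_mul hB2 hD2) hUFtC
      _ = 36 * m ^ 4 := by ring
  have hOF : (UOb A).card * (UFt A).card ≤ 1296 * m ^ 8 := by
    calc (UOb A).card * (UFt A).card ≤ (36 * m ^ 4) * (36 * m ^ 4) :=
          Nat.mul_le_mul hUOb hUFt
      _ = 1296 * m ^ 8 := by ring
  have hOC : (UOb A).card * (UCf A).card ≤ 288 * m ^ 6 := by
    calc (UOb A).card * (UCf A).card ≤ (36 * m ^ 4) * (8 * m ^ 2) :=
          Nat.mul_le_mul hUOb hUC
      _ = 288 * m ^ 6 := by ring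
  have hFC : (UFt A).card * (UCf A).card ≤ 288 * m ^ 6 := by
    calc (UFt A).card * (UCf A).card ≤ (36 * m ^ 4) * (8 * m ^ 2) :=
          Nat.mul_le_mul hUFt hUC
      _ = 288 * m ^ 6 := by ring
  have him : ∀ f : ObName × FtName → Term,
      ((UOb A ×ˢ UFt A).image f).card ≤ 1296 * m ^ 8 := by
    intro f
    calc ((UOb A ×ˢ UFt A).image f).card ≤ (UOb A ×ˢ UFt A).card := Finset.card_image_le
      _ = (UOb A).card * (UFt A).card := Finset.card_product _ _
      _ ≤ 1296 * m ^ 8 := hOF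
  have hmem : ((UOb A ×ˢ UCf A).image (fun p => Term.pos (.mem p.1 p.2))).card ≤
      288 * m ^ 6 := by
    calc _ ≤ (UOb A ×ˢ UCf A).card := Finset.card_image_le
      _ = (UOb A).card * (UCf A).card := Finset.card_product _ _
      _ ≤ 288 * m ^ 6 := hOC
  have hfmem : ((UFt A ×ˢ UCf A).image (fun p => Term.pos (.fmem p.1 p.2))).card ≤
      288 * m ^ 6 := by
    calc _ ≤ (UFt A ×ˢ UCf A).card := Finset.card_image_le
      _ = (UFt A).card * (UCf A).card := Finset.card_product _ _
      _ ≤ 288 * m ^ 6 := hFC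
  have hA : A.card ≤ m := by have := cardA_le A; omega
  have hsum : (UTerm A).card ≤ m + 4 * (1296 * m ^ 8) + 2 * (288 * m ^ 6) := by
    have e1 := him (fun p => Term.pos (.rI p.1 p.2))
    have e2 := him (fun p => Term.pos (.rbox p.1 p.2))
    have e3 := him (fun p => Term.pos (.rdia p.2 p.1))
    have e6 := him (fun p => Term.neg (.rI p.1 p.2))
    have u6 := Finset.card_union_le
      (A ∪ ((UOb A ×ˢ UFt A).image (fun p => Term.pos (.rI p.1 p.2))) ∪
        ((UOb A ×ˢ UFt A).image (fun p => Term.pos (.rbox p.1 p.2))) ∪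
        ((UOb A ×ˢ UFt A).image (fun p => Term.pos (.rdia p.2 p.1))) ∪
        ((UOb A ×ˢ UCf A).image (fun p => Term.pos (.mem p.1 p.2))) ∪
        ((UFt A ×ˢ UCf A).image (fun p => Term.pos (.fmem p.1 p.2))))
      ((UOb A ×ˢ UFt A).image (fun p => Term.neg (.rI p.1 p.2)))
    have u5 := Finset.card_union_le
      (A ∪ ((UOb A ×ˢ UFt A).image (fun p => Term.pos (.rI p.1 p.2))) ∪
        ((UOb A ×ˢ UFt A).image (fun p => Term.pos (.rbox p.1 p.2))) ∪
        ((UOb A ×ˢ UFt A).image (fun p => Term.pos (.rdia p.2 p.1))) ∪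
        ((UOb A ×ˢ UCf A).image (fun p => Term.pos (.mem p.1 p.2))))
      ((UFt A ×ˢ UCf A).image (fun p => Term.pos (.fmem p.1 p.2)))
    have u4 := Finset.card_union_le
      (A ∪ ((UOb A ×ˢ UFt A).image (fun p => Term.pos (.rI p.1 p.2))) ∪
        ((UOb A ×ˢ UFt A).image (fun p => Term.pos (.rbox p.1 p.2))) ∪
        ((UOb A ×ˢ UFt A).image (fun p => Term.pos (.rdia p.2 p.1))))
      ((UOb A ×ˢ UCf A).image (fun p => Term.pos (.mem p.1 p.2)))
    have u3 := Finset.card_union_le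
      (A ∪ ((UOb A ×ˢ UFt A).image (fun p => Term.pos (.rI p.1 p.2))) ∪
        ((UOb A ×ˢ UFt A).image (fun p => Term.pos (.rbox p.1 p.2))))
      ((UOb A ×ˢ UFt A).image (fun p => Term.pos (.rdia p.2 p.1)))
    have u2 := Finset.card_union_le
      (A ∪ ((UOb A ×ˢ UFt A).image (fun p => Term.pos (.rI p.1 p.2))))
      ((UOb A ×ˢ UFt A).image (fun p => Term.pos (.rbox p.1 p.2)))
    have u1 := Finset.card_union_le A
      ((UOb A ×ˢ UFt A).image (fun p => Term.pos (.rI p.1 p.2)))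
    show (UTerm A).card ≤ _
    unfold UTerm
    omega
  have hm6 : m ^ 6 ≤ m ^ 8 := Nat.pow_le_pow_right hm1 (by omega)
  have hm1' : m ≤ m ^ 8 := by
    calc m = m ^ 1 := (pow_one m).symm
      _ ≤ m ^ 8 := Nat.pow_le_pow_right hm1 (by omega)
  calc (UTerm A).card ≤ m + 4 * (1296 * m ^ 8) + 2 * (288 * m ^ 6) := hsum
    _ ≤ m ^ 8 + 5184 * m ^ 8 + 576 * m ^ 8 := by omega
    _ ≤ 100000 * (aboxSize A + 1) ^ 8 := by rw [← hm]; omega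

end Cardinal

/-! ### The run-length bound -/

lemma chain_subset_compl {E : Term → Term → Prop} {A : Set Term} {n : ℕ}
    {B' : ℕ → Set Term} (h0 : B' 0 = A)
    (hstep : ∀ i < n, Step E A (B' i) (B' (i + 1))) :
    ∀ j ≤ n, B' j ⊆ Compl E A := by
  intro j
  induction j with
  | zero => intro _; rw [h0]; exact subset_compl
  | succ j ih =>
    intro hjn
    obtain ⟨t, hdrv, -, heq⟩ := hstep j (by omega)
    rw [heq]
    intro u hu
    rcases Set.mem_insert_iff.1 hu with rfl | hu'
    · exact compl_closed (Deriv.mono (ih (by omega)) hdrv)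
    · exact ih (by omega) hu'

lemma chain_mono {E : Term → Term → Prop} {A : Set Term} {n : ℕ}
    {B' : ℕ → Set Term} (hstep : ∀ i < n, Step E A (B' i) (B' (i + 1))) :
    ∀ j ≤ n, ∀ i ≤ j, B' i ⊆ B' j := by
  intro j
  induction j with
  | zero => intro _ i hi; rw [Nat.le_zero.1 hi]
  | succ j ih =>
    intro hjn i hi
    rcases Nat.eq_or_lt_of_le hi with rfl | hlt
    · exact subset_rfl
    · obtain ⟨t, -, -, heq⟩ := hstep j (by omega)
      rw [heq]
      exact (ih (by omega) i (by omega)).trans (Set.subset_insert _ _)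

lemma run_le_card (A : Finset Term) {E : Term → Term → Prop} {n : ℕ}
    {B' : ℕ → Set Term}
    (hall : ∀ t ∈ Compl E ↑A, t ∈ UTerm A)
    (h0 : B' 0 = ↑A) (hstep : ∀ i < n, Step E ↑A (B' i) (B' (i + 1))) :
    n ≤ (UTerm A).card := by
  classical
  have hf : ∀ i : Fin n, ∃ t, Deriv E ↑A (B' i) t ∧ t ∉ B' i ∧
      B' (i + 1) = insert t (B' i) := fun i => hstep i i.2
  let f : Fin n → Term := fun i => (hf i).choose
  have hspec : ∀ i : Fin n, Deriv E ↑A (B' i) (f i) ∧ f i ∉ B' i ∧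
      B' (i + 1) = insert (f i) (B' i) := fun i => (hf i).choose_spec
  have hfU : ∀ i : Fin n, f i ∈ UTerm A := by
    intro i
    refine hall _ (compl_closed (Deriv.mono ?_ (hspec i).1))
    exact chain_subset_compl h0 hstep i (le_of_lt i.2)
  have key : ∀ i j : Fin n, (i : ℕ) < (j : ℕ) → f i ≠ f j := by
    intro i j hij hne
    have h1 : f i ∈ B' ((i : ℕ) + 1) := by
      rw [(hspec i).2.2]; exact Set.mem_insert _ _
    have h2 : B' ((i : ℕ) + 1) ⊆ B' (j : ℕ) :=
      chain_mono hstep j (le_of_lt j.2) _ (by omega)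
    exact (hspec j).2.1 (hne ▸ h2 h1)
  have hinj : Function.Injective f := by
    intro i j hij
    rcases lt_trichotomy (i : ℕ) (j : ℕ) with h | h | h
    · exact absurd hij (key i j h)
    · exact Fin.ext h
    · exact absurd hij.symm (key j i h)
  calc n = (Finset.univ : Finset (Fin n)).card := by simp
    _ ≤ (UTerm A).card :=
        Finset.card_le_card_of_injOn f (fun i _ => hfU i) hinj.injOn

lemma wf_base_ob {A : Set Term} (hWF : ABoxWF A) {b : ObName} (h : ObOccurs b A) :
    ∃ n, b = ObName.base n := by
  obtain ⟨t, ht, hb⟩ := h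
  exact (hWF t ht).1 b hb

lemma wf_base_ft {A : Set Term} (hWF : ABoxWF A) {y : FtName} (h : FtOccurs y A) :
    ∃ n, y = FtName.base n := by
  obtain ⟨t, ht, hy⟩ := h
  exact (hWF t ht).2 y hy

theorem separation_tableaux' :
    ∃ c k : ℕ, ∀ A : Finset Term, ABoxWF ↑A →
      (∀ b d : ObName, ObOccurs b ↑A → ObOccurs d ↑A →
        (∀ (n : ℕ) (B : ℕ → Set Term), B 0 = ↑A →
            (∀ i < n, Step (ruleSA b d) ↑A (B i) (B (i + 1))) →
            n ≤ c * (aboxSize A + 1) ^ k) ∧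
        (HasClash (Compl (ruleSA b d) ↑A) ↔
          ¬ ∃ M : Model, M.Good ∧ M.SatAll ↑A ∧
              ∀ x : M.Ft, M.I (M.oi b) x → M.I (M.oi d) x)) ∧
      (∀ y z : FtName, FtOccurs y ↑A → FtOccurs z ↑A →
        (∀ (n : ℕ) (B : ℕ → Set Term), B 0 = ↑A →
            (∀ i < n, Step (ruleSX y z) ↑A (B i) (B (i + 1))) →
            n ≤ c * (aboxSize A + 1) ^ k) ∧
        (HasClash (Compl (ruleSX y z) ↑A) ↔
          ¬ ∃ M : Model, M.Good ∧ M.SatAll ↑A ∧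
              ∀ a : M.Ob, M.I a (M.fi y) → M.I a (M.fi z))) := by
  refine ⟨100000, 8, ?_⟩
  intro A hWF
  have hsub := hsubA A
  constructor
  · -- the SA(b,d) case
    intro b d hb hd
    obtain ⟨nb, rfl⟩ := wf_base_ob hWF hb
    obtain ⟨nd, rfl⟩ := wf_base_ob hWF hd
    constructor
    · -- termination
      intro n B' h0 hstep
      have hE : ∀ t t', ruleSA (.base nb) (.base nd) t t' →
          TInv ↑A (aboxBd A) (aboxDd A) t → TInv ↑A (aboxBd A) (aboxDd A) t' := by
        rintro t t' ⟨x, rfl, rfl⟩ ht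
        obtain ⟨ho, hf, g1, g2⟩ :=
          show obOK ↑A (aboxBd A) (aboxDd A) (.base nb) ∧ ftOK ↑A (aboxBd A) (aboxDd A) x ∧
            fH x ≤ oH (aboxBd A) (.base nb) ∧ oD (.base nb) ≤ fD (aboxDd A) x from ht
        obtain ⟨hfd1, hfd2, hfd3⟩ := ftOK_bounds x hf
        refine ⟨hd, hf, ?_, ?_⟩
        · show fH x ≤ oH (aboxBd A) (.base nd)
          show fH x ≤ (aboxBd A : ℤ) + 1
          omega
        · show oD (.base nd) ≤ fD (aboxDd A) x
          show (0:ℤ) ≤ fD (aboxDd A) x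
          omega
      have hall : ∀ t ∈ Compl (ruleSA (.base nb) (.base nd)) ↑A, t ∈ UTerm A := by
        intro t ht
        exact tinv_mem_UTerm A hWF (compl_subset (tinv_ruleClosed hsub hWF hE) ht)
      exact (run_le_card A hall h0 hstep).trans (UTerm_card_le A)
    constructor
    · -- soundness: clash implies no model
      rintro hcl ⟨M, hG, hS, hAx⟩
      have hE' : ∀ t t', ruleSA (.base nb) (.base nd) t t' →
          SInv M ↑A t → SInv M ↑A t' := by
        rintro t t' ⟨x, rfl, rfl⟩ ht
        have hprem : scomp M (.rI (.base nb) x) := ht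
        show scomp M (.rI (.base nd) x)
        have hprem' : (M.genO (M.oi (.base nb))).1 ⊆ (sconF M x).1 := hprem
        show (M.genO (M.oi (.base nd))).1 ⊆ (sconF M x).1
        intro a ha
        rw [(isCpt_sconF hG x).2]
        intro u hu
        have h1 : M.oi (.base nb) ∈ (sconF M x).1 := hprem' (mem_genO_ext _)
        have h2 : u ∈ gup M.I (sconF M x).1 := by
          rw [← (isCpt_sconF hG x).1]; exact hu
        have h3 : M.I (M.oi (.base nb)) u := h2 _ h1
        have h4 : M.I (M.oi (.base nd)) u := hAx u h3
        exact ha u (fun w hw => by cases hw; exact h4)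
      exact no_clash_of_model hG hWF hS hE' hcl
    · -- completeness: no model implies... (contrapositive)
      intro hno
      by_contra hcl
      refine hno ⟨canM (ruleSA (.base nb) (.base nd)) ↑A, canM_good, canM_satAll hcl, ?_⟩
      have hbK : ObOccurs (ObName.base nb) (Compl (ruleSA (.base nb) (.base nd)) ↑A) :=
        obOccurs_mono subset_compl hb
      have hdK : ObOccurs (ObName.base nd) (Compl (ruleSA (.base nb) (.base nd)) ↑A) :=
        obOccurs_mono subset_compl hd
      intro x hI
      rw [can_oi hbK] at hI
      obtain ⟨b', y', hb', rfl, hK⟩ := hI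
      cases hb'
      rw [can_oi hdK]
      refine ⟨⟨_, hdK⟩, y', rfl, rfl, ?_⟩
      exact compl_closed (.extra ⟨y'.1, rfl, rfl⟩ hK)
  · -- the SX(y,z) case
    intro y z hy hz
    obtain ⟨ny, rfl⟩ := wf_base_ft hWF hy
    obtain ⟨nz, rfl⟩ := wf_base_ft hWF hz
    constructor
    · intro n B' h0 hstep
      have hE : ∀ t t', ruleSX (.base ny) (.base nz) t t' →
          TInv ↑A (aboxBd A) (aboxDd A) t → TInv ↑A (aboxBd A) (aboxDd A) t' := by
        rintro t t' ⟨a, rfl, rfl⟩ ht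
        obtain ⟨ho, hf, g1, g2⟩ :=
          show obOK ↑A (aboxBd A) (aboxDd A) a ∧ ftOK ↑A (aboxBd A) (aboxDd A) (.base ny) ∧
            fH (.base ny) ≤ oH (aboxBd A) a ∧ oD a ≤ fD (aboxDd A) (.base ny) from ht
        obtain ⟨ho1, ho2, ho3⟩ := obOK_bounds a ho
        refine ⟨ho, hz, ?_, ?_⟩
        · show fH (.base nz) ≤ oH (aboxBd A) a
          show (0:ℤ) ≤ oH (aboxBd A) a
          omega
        · show oD a ≤ fD (aboxDd A) (.base nz)
          show oD a ≤ (aboxDd A : ℤ) + 1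
          omega
      have hall : ∀ t ∈ Compl (ruleSX (.base ny) (.base nz)) ↑A, t ∈ UTerm A := by
        intro t ht
        exact tinv_mem_UTerm A hWF (compl_subset (tinv_ruleClosed hsub hWF hE) ht)
      exact (run_le_card A hall h0 hstep).trans (UTerm_card_le A)
    constructor
    · rintro hcl ⟨M, hG, hS, hAx⟩
      have hE' : ∀ t t', ruleSX (.base ny) (.base nz) t t' →
          SInv M ↑A t → SInv M ↑A t' := by
        rintro t t' ⟨a, rfl, rfl⟩ ht
        have hprem : scomp M (.rI a (.base ny)) := ht
        show scomp M (.rI a (.base nz))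
        show (sconO M a).1 ⊆ (M.genF (M.fi (.base nz))).1
        intro u hu
        have h1 : u ∈ (M.genF (M.fi (.base ny))).1 := hprem hu
        have h2 : M.I u (M.fi (.base ny)) := h1 _ rfl
        have h3 : M.I u (M.fi (.base nz)) := hAx u h2
        exact fun w hw => by cases hw; exact h3
      exact no_clash_of_model hG hWF hS hE' hcl
    · intro hno
      by_contra hcl
      refine hno ⟨canM (ruleSX (.base ny) (.base nz)) ↑A, canM_good, canM_satAll hcl, ?_⟩
      have hyK : FtOccurs (FtName.base ny) (Compl (ruleSX (.base ny) (.base nz)) ↑A) :=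
        ftOccurs_mono subset_compl hy
      have hzK : FtOccurs (FtName.base nz) (Compl (ruleSX (.base ny) (.base nz)) ↑A) :=
        ftOccurs_mono subset_compl hz
      intro a hI
      rw [can_fi hyK] at hI
      obtain ⟨b', y', rfl, hy', hK⟩ := hI
      cases hy'
      rw [can_fi hzK]
      refine ⟨b', ⟨_, hzK⟩, rfl, rfl, ?_⟩
      exact compl_closed (.extra ⟨b'.1, rfl, rfl⟩ hK)

/-- The tableaux algorithm obtained by adding the rule
`SA(b,d)` (from `b I x` infer `d I x`) — respectively the rule `SX(y,z)`
(from `a I y` infer `a I z`) — to the LE-ALC tableaux expansion rules is a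
terminating (in polynomial time), sound and complete decision procedure for
the consistency of `A` together with the axiom `∀p (b I p ⇒ d I p)` —
respectively of `A` together with the axiom `∀p (p I y ⇒ p I z)`. -/
theorem separation_tableaux :
    ∃ c k : ℕ, ∀ A : Finset Term, ABoxWF ↑A →
      (∀ b d : ObName, ObOccurs b ↑A → ObOccurs d ↑A →
        (∀ (n : ℕ) (B : ℕ → Set Term), B 0 = ↑A →
            (∀ i < n, Step (ruleSA b d) ↑A (B i) (B (i + 1))) →
            n ≤ c * (aboxSize A + 1) ^ k) ∧
        (HasClash (Compl (ruleSA b d) ↑A) ↔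
          ¬ ∃ M : Model, M.Good ∧ M.SatAll ↑A ∧
              ∀ x : M.Ft, M.I (M.oi b) x → M.I (M.oi d) x)) ∧
      (∀ y z : FtName, FtOccurs y ↑A → FtOccurs z ↑A →
        (∀ (n : ℕ) (B : ℕ → Set Term), B 0 = ↑A →
            (∀ i < n, Step (ruleSX y z) ↑A (B i) (B (i + 1))) →
            n ≤ c * (aboxSize A + 1) ^ k) ∧
        (HasClash (Compl (ruleSX y z) ↑A) ↔
          ¬ ∃ M : Model, M.Good ∧ M.SatAll ↑A ∧
              ∀ a : M.Ob, M.I a (M.fi y) → M.I a (M.fi z))) := by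
  exact separation_tableaux'

end LEALC
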